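/- arXiv:2503.12176 — 6 statements merged into one kernel-verified Lean document; each statement's English description precedes it below -/
import Mathlib

section
/- Let φ₁ : ℝⁿ → ℝ ∪ {+∞} and let ψ = φ₂* : ℝⁿ → ℝ ∪ {+∞} be the convex conjugate of a proper function φ₂ (so ψ is convex and lower semicontinuous). Define η(x,y) = φ₁(x)/(⟨x,y⟩ − ψ(y)) on the set where the denominator is positive. Suppose x ∈ dom φ₁, y ∈ dom ψ, φ₁(x) > 0, ⟨x,y⟩ − ψ(y) > ν for some ν > 0, φ₁ is continuous at x relative to dom φ₁, and ψ is calm at y. Then the partial Fréchet subdifferentials of η at (x,y) are given by: ∂̂ₓη(x,y) = [(⟨x,y⟩ − ψ(y))·∂̂φ₁(x) − φ₁(x)·y] / (⟨x,y⟩ − ψ(y))², and ∂̂_yη(x,y) = φ₁(x)·(∂̂ψ(y) − x) / (⟨x,y⟩ − ψ(y))². -/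
open Filter Metric Set RealInnerProductSpace
open scoped Topology Classical

noncomputable section

/-- Convexity for extended-real-valued functions. -/
def ERealConvex {α : Type*} [AddCommGroup α] [Module ℝ α] (f : α → EReal) : Prop :=
  ∀ x y : α, ∀ a b : ℝ, 0 ≤ a → 0 ≤ b → a + b = 1 →
    f (a • x + b • y) ≤ (a : EReal) * f x + (b : EReal) * f y

/-- A proper extended-real-valued function: never `⊥` and finite somewhere. -/
def ERealProper {α : Type*} (f : α → EReal) : Prop :=
  (∀ x, f x ≠ ⊥) ∧ ∃ x, f x ≠ ⊤

/-- Effective domain of an extended-real-valued function. -/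
def edom {α : Type*} (f : α → EReal) : Set α := {x | f x ≠ ⊤}

/-- Convex (Fenchel) conjugate. -/
def econj {α : Type*} [NormedAddCommGroup α] [InnerProductSpace ℝ α]
    (f : α → EReal) (y : α) : EReal :=
  ⨆ z, (((⟪z, y⟫ : ℝ) : EReal) - f z)

/-- Convex subdifferential. -/
def csubdiff {α : Type*} [NormedAddCommGroup α] [InnerProductSpace ℝ α]
    (f : α → EReal) (z : α) : Set α :=
  {v | ∀ w, f z + ((⟪v, w - z⟫ : ℝ) : EReal) ≤ f w}

/-- Normal cone of a convex set. -/
def normalCone {α : Type*} [NormedAddCommGroup α] [InnerProductSpace ℝ α]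
    (S : Set α) (x : α) : Set α :=
  {v | ∀ z ∈ S, ⟪v, z - x⟫ ≤ 0}

/-- Calmness of an extended-real-valued function at a point of its domain. -/
def ECalm {α : Type*} [NormedAddCommGroup α] (f : α → EReal) (y : α) : Prop :=
  f y ≠ ⊤ ∧ ∃ ϱ > (0:ℝ), ∃ ε > (0:ℝ), ∀ y' ∈ Metric.ball y ε,
    f y - ((ϱ * ‖y' - y‖ : ℝ) : EReal) ≤ f y' ∧ f y' ≤ f y + ((ϱ * ‖y' - y‖ : ℝ) : EReal)

/-- Fréchet subdifferential of an extended-real-valued function of one variable. -/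
def fsub {α : Type*} [NormedAddCommGroup α] [InnerProductSpace ℝ α]
    (f : α → EReal) (x : α) : Set α :=
  {v | 0 ≤ Filter.liminf
      (fun z => (f z - f x - ((⟪v, z - x⟫ : ℝ) : EReal)) * (((‖z - x‖)⁻¹ : ℝ) : EReal))
      (𝓝[≠] x)}

/-- Fréchet subdifferential of a function of two (inner-product-space) variables. -/
def fsub2 {α β : Type*} [NormedAddCommGroup α] [InnerProductSpace ℝ α]
    [NormedAddCommGroup β] [InnerProductSpace ℝ β]
    (Φ : α → β → EReal) (a : α) (b : β) : Set (α × β) :=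
  {v | 0 ≤ Filter.liminf
      (fun w : α × β =>
        (Φ w.1 w.2 - Φ a b - ((⟪v.1, w.1 - a⟫ + ⟪v.2, w.2 - b⟫ : ℝ) : EReal)) *
          (((‖w - (a, b)‖)⁻¹ : ℝ) : EReal))
      (𝓝[≠] (a, b))}

/-- Limiting (Mordukhovich) subdifferential of a function of two variables. -/
def lsub2 {α β : Type*} [NormedAddCommGroup α] [InnerProductSpace ℝ α]
    [NormedAddCommGroup β] [InnerProductSpace ℝ β]
    (Φ : α → β → EReal) (a : α) (b : β) : Set (α × β) :=
  {v | ∃ w : ℕ → α × β, ∃ vs : ℕ → α × β,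
      Tendsto w atTop (𝓝 (a, b)) ∧
      Tendsto (fun k => Φ (w k).1 (w k).2) atTop (𝓝 (Φ a b)) ∧
      (∀ k, vs k ∈ fsub2 Φ (w k).1 (w k).2) ∧
      Tendsto vs atTop (𝓝 v)}

/-- Fréchet subdifferential of a function of three variables. -/
def fsub3 {α β γ : Type*} [NormedAddCommGroup α] [InnerProductSpace ℝ α]
    [NormedAddCommGroup β] [InnerProductSpace ℝ β]
    [NormedAddCommGroup γ] [InnerProductSpace ℝ γ]
    (Φ : α → β → γ → EReal) (a : α) (b : β) (c : γ) : Set (α × β × γ) :=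
  {v | 0 ≤ Filter.liminf
      (fun w : α × β × γ =>
        (Φ w.1 w.2.1 w.2.2 - Φ a b c -
          ((⟪v.1, w.1 - a⟫ + ⟪v.2.1, w.2.1 - b⟫ + ⟪v.2.2, w.2.2 - c⟫ : ℝ) : EReal)) *
          (((‖w - (a, b, c)‖)⁻¹ : ℝ) : EReal))
      (𝓝[≠] (a, b, c))}

/-- Limiting (Mordukhovich) subdifferential of a function of three variables. -/
def lsub3 {α β γ : Type*} [NormedAddCommGroup α] [InnerProductSpace ℝ α]
    [NormedAddCommGroup β] [InnerProductSpace ℝ β]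
    [NormedAddCommGroup γ] [InnerProductSpace ℝ γ]
    (Φ : α → β → γ → EReal) (a : α) (b : β) (c : γ) : Set (α × β × γ) :=
  {v | ∃ w : ℕ → α × β × γ, ∃ vs : ℕ → α × β × γ,
      Tendsto w atTop (𝓝 (a, b, c)) ∧
      Tendsto (fun k => Φ (w k).1 (w k).2.1 (w k).2.2) atTop (𝓝 (Φ a b c)) ∧
      (∀ k, vs k ∈ fsub3 Φ (w k).1 (w k).2.1 (w k).2.2) ∧
      Tendsto vs atTop (𝓝 v)}

/-- A polyhedral set: a finite intersection of closed half-spaces. -/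
def IsPolyhedral {α : Type*} [NormedAddCommGroup α] [InnerProductSpace ℝ α]
    (S : Set α) : Prop :=
  ∃ (m : ℕ) (a : Fin m → α) (b : Fin m → ℝ), S = {z | ∀ i, ⟪a i, z⟫ ≤ b i}

/-- The merit function φ(x,u) = g(x) + h(x) + ι_S(x) + (1/(2δ))‖x-u‖². -/
def phiF {n : ℕ} (S : Set (EuclideanSpace ℝ (Fin n)))
    (g : EuclideanSpace ℝ (Fin n) → EReal) (h : EuclideanSpace ℝ (Fin n) → ℝ) (δ : ℝ)
    (x u : EuclideanSpace ℝ (Fin n)) : EReal :=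
  g x + ((h x : ℝ) : EReal) + (if x ∈ S then (0 : EReal) else ⊤)
    + (((2 * δ)⁻¹ * ‖x - u‖ ^ 2 : ℝ) : EReal)

/-- ϑ(x,u) = φ(x,u)/f(Kx). -/
def varthetaF {n p : ℕ} (S : Set (EuclideanSpace ℝ (Fin n)))
    (g : EuclideanSpace ℝ (Fin n) → EReal) (h : EuclideanSpace ℝ (Fin n) → ℝ)
    (f : EuclideanSpace ℝ (Fin p) → EReal)
    (K : EuclideanSpace ℝ (Fin n) →ₗ[ℝ] EuclideanSpace ℝ (Fin p)) (δ : ℝ)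
    (x u : EuclideanSpace ℝ (Fin n)) : EReal :=
  phiF S g h δ x u / f (K x)

/-- ϖ(x,y,u) = φ(x,u)/(⟨Kx,y⟩ - f*(y)). -/
def varpiF {n p : ℕ} (S : Set (EuclideanSpace ℝ (Fin n)))
    (g : EuclideanSpace ℝ (Fin n) → EReal) (h : EuclideanSpace ℝ (Fin n) → ℝ)
    (f : EuclideanSpace ℝ (Fin p) → EReal)
    (K : EuclideanSpace ℝ (Fin n) →ₗ[ℝ] EuclideanSpace ℝ (Fin p)) (δ : ℝ)
    (x : EuclideanSpace ℝ (Fin n)) (y : EuclideanSpace ℝ (Fin p))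
    (u : EuclideanSpace ℝ (Fin n)) : EReal :=
  phiF S g h δ x u / (((⟪K x, y⟫ : ℝ) : EReal) - econj f y)

private lemma transfer_liminf {α : Type*} {l : Filter α} {P Q : α → EReal} {c C : ℝ}
    (hc : 0 < c) (hC : 0 < C)
    (h : ∀ ε : ℝ, 0 < ε → ∀ᶠ t in l, (Q t = ⊤ ∧ P t = ⊤) ∨
      ∃ q a e : ℝ, Q t = (q : EReal) ∧ c ≤ a ∧ a ≤ C ∧ |e| ≤ ε ∧
        P t = ((a * q + e : ℝ) : EReal)) :
    (0 ≤ Filter.liminf P l ↔ 0 ≤ Filter.liminf Q l) := by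
  constructor
  · intro hP
    rw [le_liminf_iff]
    intro b hb
    induction b with
    | bot =>
        filter_upwards [h 1 one_pos] with t ht
        rcases ht with ⟨hQt, _⟩ | ⟨q, a, e, hq, _, _, _, _⟩
        · rw [hQt]; exact bot_lt_top
        · rw [hq]; exact EReal.bot_lt_coe q
    | top => exact absurd hb (by simp)
    | coe r =>
        have hr : r < 0 := by
          have := hb
          rw [show (0:EReal) = ((0:ℝ):EReal) from rfl, EReal.coe_lt_coe_iff] at this
          exact this
        have hthr : ((c * r / 2 : ℝ) : EReal) < Filter.liminf P l := by
          refine lt_of_lt_of_le ?_ hP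
          rw [show (0:EReal) = ((0:ℝ):EReal) from rfl, EReal.coe_lt_coe_iff]
          nlinarith
        filter_upwards [h (-(c*r)/2) (by nlinarith), eventually_lt_of_lt_liminf hthr]
          with t ht hPt
        rcases ht with ⟨hQt, _⟩ | ⟨q, a, e, hq, hca, haC, he, hp⟩
        · rw [hQt]; exact EReal.coe_lt_top r
        · rw [hq, EReal.coe_lt_coe_iff]
          rw [hp, EReal.coe_lt_coe_iff] at hPt
          by_contra hle
          push_neg at hle
          have hq0 : q < 0 := lt_of_le_of_lt hle hr
          have h1 : a * q ≤ c * q := mul_le_mul_of_nonpos_right hca hq0.le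
          have h2 : c * q ≤ c * r := by nlinarith
          have h3 : e ≤ -(c*r)/2 := (abs_le.1 he).2
          linarith
  · intro hQ
    rw [le_liminf_iff]
    intro b hb
    induction b with
    | bot =>
        filter_upwards [h 1 one_pos] with t ht
        rcases ht with ⟨_, hPt⟩ | ⟨q, a, e, _, _, _, _, hp⟩
        · rw [hPt]; exact bot_lt_top
        · rw [hp]; exact EReal.bot_lt_coe _
    | top => exact absurd hb (by simp)
    | coe r =>
        have hr : r < 0 := by
          rw [show (0:EReal) = ((0:ℝ):EReal) from rfl, EReal.coe_lt_coe_iff] at hb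
          exact hb
        have hthr : ((r / 2 / C : ℝ) : EReal) < Filter.liminf Q l := by
          refine lt_of_lt_of_le ?_ hQ
          rw [show (0:EReal) = ((0:ℝ):EReal) from rfl, EReal.coe_lt_coe_iff]
          have : 0 < C := hC
          nlinarith [div_neg_of_neg_of_pos (show r/2 < 0 by nlinarith) hC]
        filter_upwards [h (-r/2) (by nlinarith), eventually_lt_of_lt_liminf hthr]
          with t ht hQt
        rcases ht with ⟨_, hPt⟩ | ⟨q, a, e, hq, hca, haC, he, hp⟩
        · rw [hPt]; exact EReal.coe_lt_top r
        · rw [hp, EReal.coe_lt_coe_iff]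
          rw [hq, EReal.coe_lt_coe_iff] at hQt
          have h3 : -(-r/2) ≤ e := (abs_le.1 he).1
          rcases le_or_gt 0 q with hq0 | hq0
          · nlinarith [mul_nonneg hc.le hq0, mul_le_mul_of_nonneg_right hca hq0]
          · have h1 : C * q ≤ a * q := mul_le_mul_of_nonpos_right haC hq0.le
            have h2 : r/2 < C * q := by
              have := (div_lt_iff₀ hC).1 hQt
              linarith
            linarith


private lemma key1 (A D d p nt ip iv : ℝ) (hD : 0 < D) (hd : d = D + ip)
    (hd1 : D/2 < d) (hnt : 0 < nt) :
    (p/d - A/D - (D*iv - A*ip)/D^2) * nt⁻¹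
      = d⁻¹ * ((p - A - iv) * nt⁻¹) + (A*ip^2/(d*D^2) - iv*ip/(d*D)) * nt⁻¹ := by
  have hd0 : d ≠ 0 := by nlinarith
  have hD0 : D ≠ 0 := ne_of_gt hD
  have hnt0 : nt ≠ 0 := ne_of_gt hnt
  subst hd
  field_simp
  ring

private lemma key2 (A D d ix iv dps nt : ℝ) (hD : 0 < D) (hd : d = D + ix - dps)
    (hd1 : D/2 < d) (hnt : 0 < nt) :
    (A/d - A/D - (A/D^2)*(iv - ix)) * nt⁻¹
      = (A/(d*D)) * ((dps - iv) * nt⁻¹) + ((A/(d*D^2))*(iv-ix)*(dps - ix)) * nt⁻¹ := by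
  have hd0 : d ≠ 0 := by nlinarith
  have hD0 : D ≠ 0 := ne_of_gt hD
  have hnt0 : nt ≠ 0 := ne_of_gt hnt
  have hdps : dps = D + ix - d := by linarith
  subst hdps
  field_simp
  ring

private lemma bound1 (A D d nt ny nv ip iv : ℝ) (hA : 0 < A) (hD : 0 < D)
    (hd1 : D/2 < d) (hnt : 0 < nt) (hip : |ip| ≤ nt * ny) (hiv : |iv| ≤ nv * nt)
    (hny : 0 ≤ ny) (hnv : 0 ≤ nv) :
    |(A*ip^2/(d*D^2) - iv*ip/(d*D)) * nt⁻¹| ≤ nt * ((2*A*ny^2)/D^3 + (2*nv*ny)/D^2) := by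
  have hd0 : 0 < d := by nlinarith
  have t1 : |A*ip^2/(d*D^2)| = A*ip^2/(d*D^2) := abs_of_nonneg (by positivity)
  have t2 : |iv*ip/(d*D)| = |iv| * |ip| / (d*D) := by
    rw [abs_div, abs_mul, abs_of_pos (show (0:ℝ) < d*D by positivity)]
  have h1 : |A*ip^2/(d*D^2) - iv*ip/(d*D)| ≤ A*ip^2/(d*D^2) + |iv| * |ip| / (d*D) := by
    calc |A*ip^2/(d*D^2) - iv*ip/(d*D)| ≤ |A*ip^2/(d*D^2)| + |iv*ip/(d*D)| := abs_sub _ _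
      _ = _ := by rw [t1, t2]
  have hip2 : ip^2 ≤ (nt*ny)^2 := by
    have := pow_le_pow_left₀ (abs_nonneg ip) hip 2
    simpa [sq_abs] using this
  have h2 : A*ip^2/(d*D^2) ≤ A*(nt*ny)^2/((D/2)*D^2) := by gcongr <;> positivity
  have h3 : |iv| * |ip| / (d*D) ≤ (nv*nt)*(nt*ny)/((D/2)*D) := by
    gcongr <;> first | positivity | exact abs_nonneg _
  have e2 : A*(nt*ny)^2/((D/2)*D^2) = nt^2 * ((2*A*ny^2)/D^3) := by
    field_simp
  have e3 : (nv*nt)*(nt*ny)/((D/2)*D) = nt^2 * ((2*nv*ny)/D^2) := by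
    field_simp
  rw [e2] at h2; rw [e3] at h3
  have hfin : |(A*ip^2/(d*D^2) - iv*ip/(d*D)) * nt⁻¹|
      = |A*ip^2/(d*D^2) - iv*ip/(d*D)| * nt⁻¹ := by
    rw [abs_mul, abs_inv, abs_of_pos hnt]
  rw [hfin]
  calc |A*ip^2/(d*D^2) - iv*ip/(d*D)| * nt⁻¹
      ≤ (nt^2 * ((2*A*ny^2)/D^3 + (2*nv*ny)/D^2)) * nt⁻¹ :=
        mul_le_mul_of_nonneg_right (by linarith) (by positivity)
    _ = nt * ((2*A*ny^2)/D^3 + (2*nv*ny)/D^2) := by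
        field_simp

private lemma bound2 (A D d nt B1 B2 u1 u2 : ℝ) (hA : 0 < A) (hD : 0 < D)
    (hd1 : D/2 < d) (hnt : 0 < nt) (h1 : |u1| ≤ B1*nt) (h2 : |u2| ≤ B2*nt)
    (hB1 : 0 ≤ B1) (hB2 : 0 ≤ B2) :
    |(A/(d*D^2))*u1*u2*nt⁻¹| ≤ nt * (2*A*B1*B2/D^3) := by
  have hd0 : 0 < d := by nlinarith
  have key : |(A/(d*D^2))*u1*u2*nt⁻¹| = (A/(d*D^2)) * |u1| * |u2| * nt⁻¹ := by
    rw [abs_mul, abs_mul, abs_mul, abs_inv, abs_of_pos hnt, abs_of_pos (by positivity)]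
  rw [key]
  calc (A/(d*D^2)) * |u1| * |u2| * nt⁻¹ ≤ (A/((D/2)*D^2))*(B1*nt)*(B2*nt)*nt⁻¹ := by
        gcongr
    _ = nt * (2*A*B1*B2/D^3) := by field_simp

set_option maxHeartbeats 1000000 in
theorem stmt0 {n : ℕ}
    (φ₁ φ₂ ψ : EuclideanSpace ℝ (Fin n) → EReal)
    (hφ₁bot : ∀ z, φ₁ z ≠ ⊥)
    (hφ₂P : ERealProper φ₂)
    (hψ : ψ = econj φ₂)
    (x y : EuclideanSpace ℝ (Fin n))
    (hx : φ₁ x ≠ ⊤) (hy : ψ y ≠ ⊤)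
    (hφ₁pos : (0 : EReal) < φ₁ x)
    (ν : ℝ) (hν : 0 < ν)
    (hden : (ν : EReal) < ((⟪x, y⟫ : ℝ) : EReal) - ψ y)
    (hcont : ContinuousWithinAt φ₁ (edom φ₁) x)
    (hcalm : ECalm ψ y) :
    (fsub (fun t => φ₁ t / (((⟪t, y⟫ : ℝ) : EReal) - ψ y)) x
      = {w | ∃ v ∈ fsub φ₁ x,
          w = (((((⟪x, y⟫ : ℝ) : EReal) - ψ y).toReal ^ 2)⁻¹) •
            (((((⟪x, y⟫ : ℝ) : EReal) - ψ y).toReal) • v - (φ₁ x).toReal • y)})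
    ∧ (fsub (fun s => φ₁ x / (((⟪x, s⟫ : ℝ) : EReal) - ψ s)) y
      = {w | ∃ v ∈ fsub ψ y,
          w = (((((⟪x, y⟫ : ℝ) : EReal) - ψ y).toReal ^ 2)⁻¹) •
            ((φ₁ x).toReal • (v - x))}) := by
  obtain ⟨hbot2, z₀, hz₀⟩ := hφ₂P
  have hψbot : ψ y ≠ ⊥ := by
    obtain ⟨c, hc⟩ : ∃ r : ℝ, φ₂ z₀ = (r : EReal) := ⟨_, (EReal.coe_toReal hz₀ (hbot2 z₀)).symm⟩
    rw [hψ]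
    intro hcon
    have hle : ((((⟪z₀, y⟫ : ℝ)) : EReal) - φ₂ z₀) ≤ econj φ₂ y :=
      le_iSup (fun z => ((((⟪z, y⟫ : ℝ)) : EReal) - φ₂ z)) z₀
    rw [hcon, le_bot_iff, hc, ← EReal.coe_sub] at hle
    exact EReal.coe_ne_bot _ hle
  obtain ⟨py, hpy⟩ : ∃ r : ℝ, ψ y = (r : EReal) := ⟨_, (EReal.coe_toReal hy hψbot).symm⟩
  obtain ⟨A, hφ₁x⟩ : ∃ r : ℝ, φ₁ x = (r : EReal) := ⟨_, (EReal.coe_toReal hx (hφ₁bot x)).symm⟩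
  have hApos : 0 < A := by
    rw [hφ₁x] at hφ₁pos; exact EReal.coe_pos.1 hφ₁pos
  have hAne : A ≠ 0 := ne_of_gt hApos
  set D : ℝ := ⟪x, y⟫ - py with hD_def
  have hDν : ν < D := by
    rw [hpy, ← EReal.coe_sub] at hden
    exact EReal.coe_lt_coe_iff.1 hden
  have hDpos : 0 < D := lt_trans hν hDν
  have hDne : D ≠ 0 := ne_of_gt hDpos
  have hDtoReal : ((((⟪x, y⟫ : ℝ)) : EReal) - ψ y).toReal = D := by
    rw [hpy, ← EReal.coe_sub, EReal.toReal_coe, hD_def]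
  have hAtoReal : (φ₁ x).toReal = A := by rw [hφ₁x, EReal.toReal_coe]
  have hFx : φ₁ x / ((((⟪x, y⟫ : ℝ)) : EReal) - ψ y) = ((A / D : ℝ) : EReal) := by
    rw [hφ₁x, hpy, ← EReal.coe_sub, hD_def]
    exact (EReal.coe_div A _).symm
  -- Part 1 core equivalence
  have main1 : ∀ v w : EuclideanSpace ℝ (Fin n), w = (D^2)⁻¹ • (D • v - A • y) →
      (w ∈ fsub (fun t => φ₁ t / (((⟪t, y⟫ : ℝ) : EReal) - ψ y)) x ↔ v ∈ fsub φ₁ x) := by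
    intro v w hw
    simp only [fsub, mem_setOf_eq]
    refine transfer_liminf (c := 2/(3*D)) (C := 2/D) (by positivity) (by positivity) ?_
    intro ε hε
    obtain ⟨M, hM0, hMb⟩ : ∃ M : ℝ, 0 ≤ M ∧ (2*A*‖y‖^2)/D^3 + (2*‖v‖*‖y‖)/D^2 ≤ M :=
      ⟨_, by positivity, le_refl _⟩
    obtain ⟨δ, hδ, hδ1, hδ2⟩ : ∃ δ : ℝ, 0 < δ ∧ δ*(‖y‖+1) ≤ D/2 ∧ δ*(M+1) ≤ ε := by
      refine ⟨min (D/(2*(‖y‖+1))) (ε/(M+1)), lt_min (by positivity) (by positivity), ?_, ?_⟩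
      · have h4 := mul_le_mul_of_nonneg_right (min_le_left (D/(2*(‖y‖+1))) (ε/(M+1)))
          (show (0:ℝ) ≤ ‖y‖+1 by positivity)
        have h5 : D/(2*(‖y‖+1))*(‖y‖+1) = D/2 := by field_simp
        linarith
      · have h4 := mul_le_mul_of_nonneg_right (min_le_right (D/(2*(‖y‖+1))) (ε/(M+1)))
          (show (0:ℝ) ≤ M+1 by positivity)
        have h5 : ε/(M+1)*(M+1) = ε := by field_simp
        linarith
    have hball : Metric.ball x δ ∈ 𝓝[≠] x :=
      mem_nhdsWithin_of_mem_nhds (Metric.ball_mem_nhds x hδ)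
    filter_upwards [hball, self_mem_nhdsWithin] with t htb htne
    have htx : t ≠ x := by simpa using htne
    have hnt : 0 < ‖t - x‖ := by rw [norm_pos_iff, sub_ne_zero]; exact htx
    have hdist : ‖t - x‖ < δ := by rwa [mem_ball, dist_eq_norm] at htb
    set ip : ℝ := ⟪t - x, y⟫ with hip_def
    set iv : ℝ := ⟪v, t - x⟫ with hiv_def
    have hipb : |ip| ≤ ‖t - x‖ * ‖y‖ := abs_real_inner_le_norm _ _
    have hivb : |iv| ≤ ‖v‖ * ‖t - x‖ := abs_real_inner_le_norm _ _
    set d : ℝ := ⟪t, y⟫ - py with hd_def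
    have hdD : d = D + ip := by
      rw [hd_def, hD_def, hip_def, inner_sub_left]; ring
    have hipδ : |ip| < D/2 := by
      have h1 : |ip| ≤ ‖t - x‖ * (‖y‖+1) :=
        hipb.trans (by nlinarith [norm_nonneg (t - x)])
      have h2 : ‖t - x‖ * (‖y‖+1) < δ * (‖y‖+1) :=
        mul_lt_mul_of_pos_right hdist (by positivity)
      linarith
    obtain ⟨hip1, hip2⟩ := abs_lt.1 hipδ
    have hd1 : D/2 < d := by rw [hdD]; linarith
    have hd2 : d < 3*D/2 := by rw [hdD]; linarith
    have hd0 : 0 < d := by linarith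
    have hden_t : (((⟪t, y⟫ : ℝ)) : EReal) - ψ y = ((d : ℝ) : EReal) := by
      rw [hpy, ← EReal.coe_sub, hd_def]
    have hiwv : ⟪w, t - x⟫ = (D*iv - A*ip)/D^2 := by
      rw [hw]
      simp only [real_inner_smul_left, inner_sub_left]
      rw [hiv_def, hip_def, real_inner_comm y (t - x)]
      field_simp
    by_cases htop : φ₁ t = ⊤
    · refine Or.inl ⟨?_, ?_⟩
      · show (φ₁ t - φ₁ x - ((⟪v, t - x⟫ : ℝ) : EReal)) * (((‖t - x‖)⁻¹ : ℝ) : EReal) = ⊤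
        rw [htop, hφ₁x, ← hiv_def, EReal.top_sub_coe, EReal.top_sub_coe,
          EReal.top_mul_coe_of_pos (inv_pos.2 hnt)]
      · show (φ₁ t / (((⟪t, y⟫ : ℝ) : EReal) - ψ y)
            - φ₁ x / (((⟪x, y⟫ : ℝ) : EReal) - ψ y)
            - ((⟪w, t - x⟫ : ℝ) : EReal)) * (((‖t - x‖)⁻¹ : ℝ) : EReal) = ⊤
        rw [htop, hden_t, hFx, div_eq_mul_inv, ← EReal.coe_inv,
          EReal.top_mul_coe_of_pos (inv_pos.2 hd0), EReal.top_sub_coe, EReal.top_sub_coe,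
          EReal.top_mul_coe_of_pos (inv_pos.2 hnt)]
    · obtain ⟨p, hp⟩ : ∃ r : ℝ, φ₁ t = (r : EReal) := ⟨_, (EReal.coe_toReal htop (hφ₁bot t)).symm⟩
      refine Or.inr ⟨(p - A - iv) * ‖t - x‖⁻¹, d⁻¹,
        (A*ip^2/(d*D^2) - iv*ip/(d*D)) * ‖t - x‖⁻¹, ?_, ?_, ?_, ?_, ?_⟩
      · show (φ₁ t - φ₁ x - ((⟪v, t - x⟫ : ℝ) : EReal)) * (((‖t - x‖)⁻¹ : ℝ) : EReal) = _
        rw [hp, hφ₁x, ← hiv_def]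
        norm_cast
      · have he : (2:ℝ)/(3*D) = (3*D/2)⁻¹ := by
          rw [inv_div]
        rw [he]
        exact inv_anti₀ hd0 hd2.le
      · have he : (2:ℝ)/D = (D/2)⁻¹ := by rw [inv_div]
        rw [he]
        exact inv_anti₀ (by positivity) hd1.le
      · have hb := bound1 A D d ‖t - x‖ ‖y‖ ‖v‖ ip iv hApos hDpos hd1 hnt hipb hivb
          (norm_nonneg y) (norm_nonneg v)
        refine hb.trans ?_
        have h5 : ‖t - x‖ * ((2*A*‖y‖^2)/D^3 + (2*‖v‖*‖y‖)/D^2) ≤ ‖t - x‖ * (M+1) :=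
          mul_le_mul_of_nonneg_left (by linarith) hnt.le
        have h7 : ‖t - x‖ * (M+1) < δ * (M+1) :=
          mul_lt_mul_of_pos_right hdist (by positivity)
        linarith
      · show (φ₁ t / (((⟪t, y⟫ : ℝ) : EReal) - ψ y)
            - φ₁ x / (((⟪x, y⟫ : ℝ) : EReal) - ψ y)
            - ((⟪w, t - x⟫ : ℝ) : EReal)) * (((‖t - x‖)⁻¹ : ℝ) : EReal) = _
        rw [hp, hden_t, hFx, hiwv, ← EReal.coe_div]
        norm_cast
        linear_combination key1 A D d p ‖t - x‖ ip iv hDpos hdD hd1 hnt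
  -- Part 2 core equivalence
  obtain ⟨-, ϱ, hϱ, εc, hεc, Hcalm⟩ := hcalm
  have main2 : ∀ v w : EuclideanSpace ℝ (Fin n), w = (D^2)⁻¹ • (A • (v - x)) →
      (w ∈ fsub (fun s => φ₁ x / (((⟪x, s⟫ : ℝ) : EReal) - ψ s)) y ↔ v ∈ fsub ψ y) := by
    intro v w hw
    simp only [fsub, mem_setOf_eq]
    refine transfer_liminf (c := 2*A/(3*D^2)) (C := 2*A/D^2) (by positivity) (by positivity) ?_
    intro ε hε
    obtain ⟨M, hM0, hMb⟩ : ∃ M : ℝ, 0 ≤ M ∧ 2*A*‖v - x‖*(ϱ+‖x‖)/D^3 ≤ M :=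
      ⟨_, by positivity, le_refl _⟩
    obtain ⟨δ, hδ, hδ1, hδ2, hδ3⟩ :
        ∃ δ : ℝ, 0 < δ ∧ δ*(‖x‖+ϱ+1) ≤ D/2 ∧ δ*(M+1) ≤ ε ∧ δ ≤ εc := by
      refine ⟨min (min (D/(2*(‖x‖+ϱ+1))) (ε/(M+1))) εc,
        lt_min (lt_min (by positivity) (by positivity)) hεc, ?_, ?_, min_le_right _ _⟩
      · have h4 := mul_le_mul_of_nonneg_right
          ((min_le_left _ εc).trans (min_le_left (D/(2*(‖x‖+ϱ+1))) (ε/(M+1))))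
          (show (0:ℝ) ≤ ‖x‖+ϱ+1 by positivity)
        have h5 : D/(2*(‖x‖+ϱ+1))*(‖x‖+ϱ+1) = D/2 := by field_simp
        linarith
      · have h4 := mul_le_mul_of_nonneg_right
          ((min_le_left _ εc).trans (min_le_right (D/(2*(‖x‖+ϱ+1))) (ε/(M+1))))
          (show (0:ℝ) ≤ M+1 by positivity)
        have h5 : ε/(M+1)*(M+1) = ε := by field_simp
        linarith
    have hball : Metric.ball y δ ∈ 𝓝[≠] y :=
      mem_nhdsWithin_of_mem_nhds (Metric.ball_mem_nhds y hδ)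
    filter_upwards [hball, self_mem_nhdsWithin] with s htb htne
    have hsy : s ≠ y := by simpa using htne
    have hnt : 0 < ‖s - y‖ := by rw [norm_pos_iff, sub_ne_zero]; exact hsy
    have hdist : ‖s - y‖ < δ := by rwa [mem_ball, dist_eq_norm] at htb
    have hsball : s ∈ Metric.ball y εc := by
      rw [mem_ball, dist_eq_norm]
      exact hdist.trans_le hδ3
    obtain ⟨hlo, hhi⟩ := Hcalm s hsball
    rw [hpy, ← EReal.coe_sub] at hlo
    rw [hpy, ← EReal.coe_add] at hhi
    have hstop : ψ s ≠ ⊤ := (hhi.trans_lt (EReal.coe_lt_top _)).ne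
    have hsbot : ψ s ≠ ⊥ := ((EReal.bot_lt_coe _).trans_le hlo).ne'
    obtain ⟨ps, hps⟩ : ∃ r : ℝ, ψ s = (r : EReal) := ⟨_, (EReal.coe_toReal hstop hsbot).symm⟩
    rw [hps] at hlo hhi
    have hlo' := EReal.coe_le_coe_iff.1 hlo
    have hhi' := EReal.coe_le_coe_iff.1 hhi
    have hdps : |ps - py| ≤ ϱ * ‖s - y‖ := abs_le.mpr ⟨by linarith, by linarith⟩
    set ix : ℝ := ⟪x, s - y⟫ with hix_def
    set iv : ℝ := ⟪v, s - y⟫ with hiv_def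
    set u1 : ℝ := ⟪v - x, s - y⟫ with hu1_def
    have hu1 : u1 = iv - ix := by rw [hu1_def, hix_def, hiv_def, inner_sub_left]
    have hixb : |ix| ≤ ‖x‖ * ‖s - y‖ := abs_real_inner_le_norm _ _
    have hu1b : |u1| ≤ ‖v - x‖ * ‖s - y‖ := abs_real_inner_le_norm _ _
    set d : ℝ := ⟪x, s⟫ - ps with hd_def
    have hdD : d = D + ix - (ps - py) := by
      rw [hd_def, hD_def, hix_def, inner_sub_right]; ring
    have hdclose : |ix - (ps - py)| < D/2 := by
      have h1 : |ix - (ps - py)| ≤ ‖s - y‖ * (‖x‖+ϱ+1) := by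
        have := abs_sub (ix) (ps - py)
        nlinarith [norm_nonneg (s - y), abs_sub ix (ps - py)]
      have h2 : ‖s - y‖ * (‖x‖+ϱ+1) < δ * (‖x‖+ϱ+1) :=
        mul_lt_mul_of_pos_right hdist (by positivity)
      linarith
    obtain ⟨hc1, hc2⟩ := abs_lt.1 hdclose
    have hd1 : D/2 < d := by rw [hdD]; linarith
    have hd2 : d < 3*D/2 := by rw [hdD]; linarith
    have hd0 : 0 < d := by linarith
    have hden_t : (((⟪x, s⟫ : ℝ)) : EReal) - ψ s = ((d : ℝ) : EReal) := by
      rw [hps, ← EReal.coe_sub, hd_def]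
    have hiwv : ⟪w, s - y⟫ = (A/D^2)*(iv - ix) := by
      rw [hw]
      simp only [real_inner_smul_left, inner_sub_left]
      rw [hiv_def, hix_def]
      field_simp
    refine Or.inr ⟨((ps - py) - iv) * ‖s - y‖⁻¹, A/(d*D),
      (A/(d*D^2))*u1*((ps - py) - ix)*‖s - y‖⁻¹, ?_, ?_, ?_, ?_, ?_⟩
    · show (ψ s - ψ y - ((⟪v, s - y⟫ : ℝ) : EReal)) * (((‖s - y‖)⁻¹ : ℝ) : EReal) = _
      rw [hps, hpy, ← hiv_def]
      norm_cast
    · have hle : A/((3*D/2)*D) ≤ A/(d*D) := by gcongr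
      have he : A/((3*D/2)*D) = 2*A/(3*D^2) := by
        rw [div_eq_div_iff (by positivity) (by positivity)]; ring
      linarith
    · have hle : A/(d*D) ≤ A/((D/2)*D) := by gcongr
      have he : A/((D/2)*D) = 2*A/D^2 := by
        rw [div_eq_div_iff (by positivity) (by positivity)]; ring
      linarith
    · have hu2b : |(ps - py) - ix| ≤ (ϱ+‖x‖) * ‖s - y‖ := by
        have := abs_sub (ps - py) ix
        nlinarith [abs_sub (ps - py) ix]
      have hb := bound2 A D d ‖s - y‖ ‖v - x‖ (ϱ+‖x‖) u1 ((ps - py) - ix) hApos hDpos hd1 hnt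
        (by rw [mul_comm] at hu1b ⊢; exact hu1b) hu2b (norm_nonneg _) (by positivity)
      refine hb.trans ?_
      have h5 : ‖s - y‖ * (2*A*‖v - x‖*(ϱ+‖x‖)/D^3) ≤ ‖s - y‖ * (M+1) :=
        mul_le_mul_of_nonneg_left (by linarith) hnt.le
      have h7 : ‖s - y‖ * (M+1) < δ * (M+1) :=
        mul_lt_mul_of_pos_right hdist (by positivity)
      linarith
    · show (φ₁ x / (((⟪x, s⟫ : ℝ) : EReal) - ψ s)
          - φ₁ x / (((⟪x, y⟫ : ℝ) : EReal) - ψ y)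
          - ((⟪w, s - y⟫ : ℝ) : EReal)) * (((‖s - y‖)⁻¹ : ℝ) : EReal) = _
      rw [hden_t, hFx, hiwv, hφ₁x, ← EReal.coe_div]
      norm_cast
      have hk := key2 A D d ix iv (ps - py) ‖s - y‖ hDpos hdD hd1 hnt
      rw [hu1]
      linear_combination hk
  -- Assemble
  have hvw1 : ∀ w : EuclideanSpace ℝ (Fin n),
      w = (D^2)⁻¹ • (D • (D • w + (A/D) • y) - A • y) := by
    intro w
    have e1 : D • (D • w + (A/D) • y) - A • y = (D*D) • w + (D*(A/D) - A) • y := by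
      rw [smul_add, smul_smul, smul_smul, add_sub_assoc, ← sub_smul]
    have e2 : D*(A/D) - A = 0 := by field_simp; ring
    have e3 : (D^2)⁻¹ * (D*D) = 1 := by
      field_simp
    rw [e1, e2, zero_smul, add_zero, smul_smul, e3, one_smul]
  have hvw2 : ∀ w : EuclideanSpace ℝ (Fin n),
      w = (D^2)⁻¹ • (A • ((x + (A⁻¹*D^2) • w) - x)) := by
    intro w
    rw [add_sub_cancel_left, smul_smul, smul_smul]
    have e3 : (D^2)⁻¹ * A * (A⁻¹*D^2) = 1 := by
      field_simp
    rw [e3, one_smul]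
  constructor
  · ext w
    simp only [mem_setOf_eq, hDtoReal, hAtoReal]
    constructor
    · intro hw
      exact ⟨D • w + (A/D) • y, (main1 _ w (hvw1 w)).mp hw, hvw1 w⟩
    · rintro ⟨v, hv, rfl⟩
      exact (main1 v _ rfl).mpr hv
  · ext w
    simp only [mem_setOf_eq, hDtoReal, hAtoReal]
    constructor
    · intro hw
      exact ⟨x + (A⁻¹*D^2) • w, (main2 _ w (hvw2 w)).mp hw, hvw2 w⟩
    · rintro ⟨v, hv, rfl⟩
      exact (main2 v _ rfl).mpr hv
end
end

section
/- Let the sequences (xᵏ, yᵏ, uᵏ, θ_k) be generated by the FPSA iteration. Then for every k, φ(xᵏ⁺¹, uᵏ) + θ_k·[f(Kxᵏ) − (⟨Kxᵏ⁺¹, yᵏ⁺¹⟩ − f*(yᵏ⁺¹))] ≤ φ(xᵏ, uᵏ) − ((1/δ − L_{∇h})/2)·‖xᵏ⁺¹ − xᵏ‖². -/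
open Filter Metric Set RealInnerProductSpace
open scoped Topology Classical

noncomputable section

lemma limit_aux {a b R C : ℝ} (hC : 0 ≤ C)
    (h : ∀ t : ℝ, 0 < t → t ≤ 1 → b ≤ a + R + t * C) : b ≤ a + R := by
  by_contra hcon
  push_neg at hcon
  set ε := b - (a + R) with hε
  have hεpos : 0 < ε := by rw [hε]; linarith
  set t := min 1 (ε / (2*(C+1))) with htdef
  have ht1 : t ≤ 1 := min_le_left _ _
  have htpos : 0 < t := lt_min one_pos (by positivity)
  have h1 := h t htpos ht1
  have h3 : t ≤ ε / (2*(C+1)) := min_le_right _ _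
  have h4 : t * C ≤ ε / (2*(C+1)) * C := mul_le_mul_of_nonneg_right h3 hC
  have h5 : ε / (2*(C+1)) * C ≤ ε / 2 := by
    rw [div_mul_eq_mul_div, div_le_div_iff₀ (by linarith) two_pos]
    nlinarith
  rw [hε] at hεpos h5
  linarith

lemma descent_aux {E : Type*} [NormedAddCommGroup E] [InnerProductSpace ℝ E] [CompleteSpace E]
    (h : E → ℝ) (gh : E → E) (L : ℝ)
    (O : Set E) (hd : ∀ z ∈ O, HasGradientAt h (gh z) z)
    (hlip : ∀ z ∈ O, ∀ w ∈ O, ‖gh z - gh w‖ ≤ L * ‖z - w‖)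
    (x y : E) (hseg : ∀ t : ℝ, t ∈ Set.Icc (0:ℝ) 1 → x + t • (y - x) ∈ O) :
    h y ≤ h x + ⟪gh x, y - x⟫ + L / 2 * ‖y - x‖ ^ 2 := by
  set d := y - x with hd'
  have hxO : x ∈ O := by simpa using hseg 0 ⟨le_refl _, zero_le_one⟩
  have hderiv : ∀ t ∈ Set.Icc (0:ℝ) 1,
      HasDerivAt (fun s : ℝ => h (x + s • d) - s * ⟪gh x, d⟫ - L / 2 * s ^ 2 * ‖d‖ ^ 2)
        (⟪gh (x + t • d), d⟫ - ⟪gh x, d⟫ - L * t * ‖d‖ ^ 2) t := by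
    intro t ht
    have hline : HasDerivAt (fun s : ℝ => x + s • d) d t := by
      simpa using ((hasDerivAt_id t).smul_const d).const_add x
    have hcomp : HasDerivAt (fun s : ℝ => h (x + s • d)) ⟪gh (x + t • d), d⟫ t := by
      simpa [InnerProductSpace.toDual_apply_apply, Function.comp_def] using
        (hd _ (hseg t ht)).hasFDerivAt.comp_hasDerivAt t hline
    have h2 : HasDerivAt (fun s : ℝ => s * ⟪gh x, d⟫) ⟪gh x, d⟫ t := by
      simpa using (hasDerivAt_id t).mul_const ⟪gh x, d⟫
    have h3 : HasDerivAt (fun s : ℝ => L / 2 * s ^ 2 * ‖d‖ ^ 2) (L * t * ‖d‖ ^ 2) t := by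
      have := ((hasDerivAt_pow 2 t).const_mul (L / 2)).mul_const (‖d‖ ^ 2)
      exact this.congr_deriv (by ring)
    exact (hcomp.sub h2).sub h3
  have hmono : AntitoneOn
      (fun s : ℝ => h (x + s • d) - s * ⟪gh x, d⟫ - L / 2 * s ^ 2 * ‖d‖ ^ 2) (Set.Icc 0 1) := by
    apply antitoneOn_of_deriv_nonpos (convex_Icc 0 1)
    · exact fun t ht => (hderiv t ht).continuousAt.continuousWithinAt
    · intro t ht
      rw [interior_Icc] at ht
      exact (hderiv t (Set.mem_Icc_of_Ioo ht)).differentiableAt.differentiableWithinAt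
    · intro t ht
      rw [interior_Icc] at ht
      rw [(hderiv t (Set.mem_Icc_of_Ioo ht)).deriv]
      have hzO : x + t • d ∈ O := hseg t (Set.mem_Icc_of_Ioo ht)
      have h1 : ⟪gh (x + t • d) - gh x, d⟫ ≤ ‖gh (x + t • d) - gh x‖ * ‖d‖ :=
        real_inner_le_norm _ _
      have h2 : ‖gh (x + t • d) - gh x‖ ≤ L * ‖(x + t • d) - x‖ := hlip _ hzO _ hxO
      have h3 : ‖(x + t • d) - x‖ = t * ‖d‖ := by
        rw [add_sub_cancel_left, norm_smul, Real.norm_eq_abs, abs_of_pos ht.1]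
      have hsplit : ⟪gh (x + t • d) - gh x, d⟫ = ⟪gh (x + t • d), d⟫ - ⟪gh x, d⟫ :=
        inner_sub_left _ _ _
      rw [h3] at h2
      have h4 := mul_le_mul_of_nonneg_right h2 (norm_nonneg d)
      nlinarith [h1, h4, hsplit]
  have hfin := hmono (Set.left_mem_Icc.2 zero_le_one) (Set.right_mem_Icc.2 zero_le_one) zero_le_one
  simp only [zero_smul, add_zero, one_smul, zero_pow, mul_zero, zero_mul, sub_zero, one_pow,
    mul_one, one_mul] at hfin
  have hxy : x + d = y := by rw [hd']; abel
  rw [hxy] at hfin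
  linarith

set_option maxHeartbeats 1000000 in
theorem stmt1 {n p : ℕ}
    (S : Set (EuclideanSpace ℝ (Fin n)))
    (g : EuclideanSpace ℝ (Fin n) → EReal)
    (h : EuclideanSpace ℝ (Fin n) → ℝ)
    (gh : EuclideanSpace ℝ (Fin n) → EuclideanSpace ℝ (Fin n))
    (f : EuclideanSpace ℝ (Fin p) → EReal)
    (K : EuclideanSpace ℝ (Fin n) →ₗ[ℝ] EuclideanSpace ℝ (Fin p))
    (L δ : ℝ)
    (hS : S.Nonempty) (hSconv : Convex ℝ S) (hScomp : IsCompact S)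
    (hgP : ERealProper g) (hgconv : ERealConvex g) (hglsc : LowerSemicontinuous g)
    (hfP : ERealProper f) (hfconv : ERealConvex f) (hflsc : LowerSemicontinuous f)
    (hL : 0 < L)
    (hhC1 : ∃ O : Set (EuclideanSpace ℝ (Fin n)), IsOpen O ∧ S ⊆ O ∧
      (∀ z ∈ O, HasGradientAt h (gh z) z) ∧
      (∀ z ∈ O, ∀ w ∈ O, ‖gh z - gh w‖ ≤ L * ‖z - w‖))
    (hKS : ∀ z ∈ S, K z ∈ interior (edom f))
    (hfpos : ∀ z ∈ S, (0 : EReal) < f (K z))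
    (hghnn : ∀ z ∈ S, (0 : EReal) ≤ g z + ((h z : ℝ) : EReal))
    (hSg : ∃ z ∈ S, g z ≠ ⊤)
    (hδ : 0 < δ) (hδL : δ < 1 / L)
    (σ : ℝ) (hσ : 0 < σ) (hσ2 : σ < 2)
    (x u : ℕ → EuclideanSpace ℝ (Fin n)) (y : ℕ → EuclideanSpace ℝ (Fin p)) (θ : ℕ → ℝ)
    (hxS : ∀ k, x k ∈ S ∧ g (x k) ≠ ⊤)
    (hy : ∀ k, y (k+1) ∈ csubdiff f (K (x k)))
    (hxmin : ∀ k, ∀ w ∈ S,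
      g (x (k+1)) + (((2*δ)⁻¹ * ‖x (k+1) - u k + δ • gh (x k)
          - (θ k * δ) • (LinearMap.adjoint K) (y (k+1))‖ ^ 2 : ℝ) : EReal)
        ≤ g w + (((2*δ)⁻¹ * ‖w - u k + δ • gh (x k)
          - (θ k * δ) • (LinearMap.adjoint K) (y (k+1))‖ ^ 2 : ℝ) : EReal))
    (hu : ∀ k, u (k+1) = (1 - σ) • u k + σ • x (k+1))
    (hθ : ∀ k, (θ k : EReal) = varthetaF S g h f K δ (x k) (u k))
    (hθnn : ∀ k, 0 ≤ θ k)
    :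
    ∀ k : ℕ,
      phiF S g h δ (x (k+1)) (u k)
        + ((θ k : ℝ) : EReal) * (f (K (x k))
            - (((⟪K (x (k+1)), y (k+1)⟫ : ℝ) : EReal) - econj f (y (k+1))))
      ≤ phiF S g h δ (x k) (u k)
        - ((((1 / δ - L) / 2) * ‖x (k+1) - x k‖ ^ 2 : ℝ) : EReal) := by
  
  intro k
  obtain ⟨O, hO, hSO, hdO, hlip⟩ := hhC1
  obtain ⟨hx0S, hgx0⟩ := hxS k
  obtain ⟨hx1S, hgx1⟩ := hxS (k+1)
  have hmin0 := hxmin k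
  have hsub := hy k
  set x0 := x k with hx0def
  set x1 := x (k+1) with hx1def
  set u0 := u k with hu0def
  set y1 := y (k+1) with hy1def
  set t0 := θ k with ht0def
  set A := (LinearMap.adjoint K) y1 with hAdef
  set v1 := x1 - u0 + δ • gh x0 - (t0 * δ) • A with hv1
  clear_value x0 x1 u0 y1 t0 A v1
  set a := (g x0).toReal with ha'
  set b := (g x1).toReal with hb'
  have ha : g x0 = (a : EReal) := (EReal.coe_toReal hgx0 (hgP.1 _)).symm
  have hb : g x1 = (b : EReal) := (EReal.coe_toReal hgx1 (hgP.1 _)).symm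
  have hfKtop : f (K x0) ≠ ⊤ := interior_subset (hKS _ hx0S)
  set F := (f (K x0)).toReal with hF'
  have hF : f (K x0) = (F : EReal) := (EReal.coe_toReal hfKtop (hfP.1 _)).symm
  clear_value a b F
  -- Fenchel equality
  have hconj : econj f y1 = ((⟪K x0, y1⟫ - F : ℝ) : EReal) := by
    apply le_antisymm
    · apply iSup_le
      intro z
      by_cases hz : f z = ⊤
      · rw [hz, EReal.sub_top]; exact bot_le
      · have hzb : f z ≠ ⊥ := hfP.1 z
        have hfz : f z = ((f z).toReal : EReal) := (EReal.coe_toReal hz hzb).symm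
        have h1 := hsub z
        rw [hF, hfz] at h1
        have h2 : F + ⟪y1, z - K x0⟫ ≤ (f z).toReal := by exact_mod_cast h1
        rw [hfz, ← EReal.coe_sub]
        apply EReal.coe_le_coe_iff.2
        have e1 : ⟪y1, z - K x0⟫ = ⟪z, y1⟫ - ⟪K x0, y1⟫ := by
          rw [inner_sub_right, real_inner_comm y1 z, real_inner_comm y1 (K x0)]
        rw [e1] at h2
        linarith
    · have h1 : (((⟪K x0, y1⟫ : ℝ) : EReal) - f (K x0)) ≤ econj f y1 :=
        le_iSup (fun z => (((⟪z, y1⟫ : ℝ) : EReal) - f z)) (K x0)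
      rw [hF, ← EReal.coe_sub] at h1
      exact h1
  -- key inequality from the proximal step
  have hstep : ∀ t : ℝ, 0 < t → t ≤ 1 →
      b ≤ a + 2 * (2*δ)⁻¹ * ⟪v1, x0 - x1⟫ + t * ((2*δ)⁻¹ * ‖x0 - x1‖ ^ 2) := by
    intro t ht ht1
    set wt := (1 - t) • x1 + t • x0 with hwt
    clear_value wt
    have hwtS : wt ∈ S := by
      rw [hwt]; exact hSconv hx1S hx0S (by linarith) ht.le (by ring)
    have hmin := hmin0 wt hwtS
    rw [hb] at hmin
    have hgc := hgconv x1 x0 (1 - t) t (by linarith) ht.le (by ring)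
    rw [ha, hb] at hgc
    have hgc' : g wt ≤ (((1-t)*b + t*a : ℝ) : EReal) := by
      rw [hwt, EReal.coe_add, EReal.coe_mul, EReal.coe_mul]
      exact hgc
    have hchain := le_trans hmin (add_le_add_left hgc' _)
    have hre : b + (2*δ)⁻¹ * ‖v1‖ ^ 2
        ≤ (1-t)*b + t*a + (2*δ)⁻¹ * ‖wt - u0 + δ • gh x0 - (t0 * δ) • A‖ ^ 2 := by
      exact_mod_cast hchain
    have hXt : wt - u0 + δ • gh x0 - (t0 * δ) • A = v1 + t • (x0 - x1) := by
      rw [hwt, hv1]; module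
    rw [hXt, norm_add_sq_real, real_inner_smul_right, norm_smul, Real.norm_eq_abs,
      abs_of_pos ht] at hre
    have h' : t * b ≤ t * (a + 2 * (2*δ)⁻¹ * ⟪v1, x0 - x1⟫ + t * ((2*δ)⁻¹ * ‖x0 - x1‖ ^ 2)) := by
      nlinarith [hre]
    exact le_of_mul_le_mul_left h' ht
  have hkey : b ≤ a + 2 * (2*δ)⁻¹ * ⟪v1, x0 - x1⟫ := by
    have hcpos : (0:ℝ) < (2*δ)⁻¹ := inv_pos.2 (by linarith)
    exact limit_aux (mul_nonneg hcpos.le (sq_nonneg _)) hstep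
  -- inner product expansions
  have hA : ⟪A, x0 - x1⟫ = ⟪K x0, y1⟫ - ⟪K x1, y1⟫ := by
    rw [hAdef, LinearMap.adjoint_inner_left, map_sub, inner_sub_right,
      real_inner_comm y1 (K x0), real_inner_comm y1 (K x1)]
  have e1 : ⟪v1, x0 - x1⟫ = ⟪x1 - u0, x0 - x1⟫ + δ * ⟪gh x0, x0 - x1⟫
      - (t0 * δ) * (⟪K x0, y1⟫ - ⟪K x1, y1⟫) := by
    rw [hv1, inner_sub_left, inner_add_left, real_inner_smul_left, real_inner_smul_left, hA]
  have e1c : 2 * (2*δ)⁻¹ * ⟪v1, x0 - x1⟫ = 2 * (2*δ)⁻¹ * ⟪x1 - u0, x0 - x1⟫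
      + ⟪gh x0, x0 - x1⟫ - t0 * (⟪K x0, y1⟫ - ⟪K x1, y1⟫) := by
    rw [e1]; field_simp
  have e2 : ‖x0 - u0‖ ^ 2 = ‖x1 - u0‖ ^ 2 + 2 * ⟪x1 - u0, x0 - x1⟫ + ‖x0 - x1‖ ^ 2 := by
    have hsplit : x0 - u0 = (x1 - u0) + (x0 - x1) := by abel
    rw [hsplit, norm_add_sq_real]
  have e2c : (2*δ)⁻¹ * ‖x0 - u0‖ ^ 2 = (2*δ)⁻¹ * ‖x1 - u0‖ ^ 2
      + 2 * (2*δ)⁻¹ * ⟪x1 - u0, x0 - x1⟫ + (2*δ)⁻¹ * ‖x0 - x1‖ ^ 2 := by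
    rw [e2]; ring
  -- descent lemma
  have hdesc : h x1 ≤ h x0 + ⟪gh x0, x1 - x0⟫ + L / 2 * ‖x1 - x0‖ ^ 2 := by
    apply descent_aux h gh L O hdO hlip x0 x1
    intro t ht
    apply hSO
    have hcomb : x0 + t • (x1 - x0) = (1 - t) • x0 + t • x1 := by module
    rw [hcomb]
    exact hSconv hx0S hx1S (by linarith [ht.2]) ht.1 (by ring)
  have e4 : ⟪gh x0, x1 - x0⟫ = -⟪gh x0, x0 - x1⟫ := by
    rw [show x1 - x0 = -(x0 - x1) by abel, inner_neg_right]
  have e3 : ‖x1 - x0‖ = ‖x0 - x1‖ := norm_sub_rev _ _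
  rw [e4, e3] at hdesc
  -- real-valued form of the goal
  have goalr : b + h x1 + (2*δ)⁻¹ * ‖x1 - u0‖ ^ 2
      + t0 * (F - (⟪K x1, y1⟫ - (⟪K x0, y1⟫ - F)))
      ≤ a + h x0 + (2*δ)⁻¹ * ‖x0 - u0‖ ^ 2 - ((1 / δ - L) / 2) * ‖x1 - x0‖ ^ 2 := by
    rw [e3]
    have h1δ : (1 / δ - L) / 2 * ‖x0 - x1‖ ^ 2
        = (2*δ)⁻¹ * ‖x0 - x1‖ ^ 2 - L / 2 * ‖x0 - x1‖ ^ 2 := by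
      field_simp
    rw [h1δ]
    linarith [hkey, e1c, e2c, hdesc]
  -- pass to EReal
  simp only [phiF, if_pos hx1S, if_pos hx0S, hb, ha, add_zero]
  rw [hF, hconj]
  exact_mod_cast goalr
end
end

section
/- (Theorem 3.2) Let the sequences (xᵏ, yᵏ, uᵏ, θ_k) be generated by the FPSA iteration. Then for every k, φ(xᵏ⁺¹, uᵏ⁺¹) − θ_k·f(Kxᵏ⁺¹) ≤ −ϱ₁‖xᵏ − xᵏ⁺¹‖² − ϱ₂‖uᵏ − uᵏ⁺¹‖². -/
open Filter Metric Set RealInnerProductSpace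
open scoped Topology Classical

noncomputable section
set_option maxHeartbeats 1000000

private lemma comb_norm_sq {n : ℕ} (a b : EuclideanSpace ℝ (Fin n)) (l : ℝ) :
    ‖(1 - l) • a + l • b‖ ^ 2
      = (1 - l) * ‖a‖ ^ 2 + l * ‖b‖ ^ 2 - l * (1 - l) * ‖a - b‖ ^ 2 := by
  have e : ∀ v : EuclideanSpace ℝ (Fin n), ‖v‖ ^ 2 = ⟪v, v⟫ :=
    fun v => (real_inner_self_eq_norm_sq v).symm
  rw [e, e, e, e]
  simp only [inner_add_left, inner_add_right, inner_sub_left, inner_sub_right,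
    real_inner_smul_left, real_inner_smul_right]
  rw [real_inner_comm b a]
  ring

private lemma limit_lemma {A B C : ℝ}
    (h : ∀ l ∈ Ioo (0:ℝ) 1, A ≤ B - (1 - l) * C) : A ≤ B - C := by
  have ht : Tendsto (fun l : ℝ => B - (1 - l) * C) (nhdsWithin 0 (Ioi 0)) (nhds (B - C)) := by
    have hcont : Continuous (fun l : ℝ => B - (1 - l) * C) := by continuity
    have h2 : Tendsto (fun l : ℝ => B - (1 - l) * C) (nhdsWithin 0 (Ioi 0))
        (nhds (B - (1 - 0) * C)) :=
      (hcont.tendsto 0).mono_left nhdsWithin_le_nhds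
    simpa using h2
  exact ge_of_tendsto ht (Filter.eventually_of_mem
    (Ioo_mem_nhdsGT_of_mem ⟨le_refl 0, zero_lt_one⟩) h)

private lemma my_descent {n : ℕ} {h : EuclideanSpace ℝ (Fin n) → ℝ}
    {gh : EuclideanSpace ℝ (Fin n) → EuclideanSpace ℝ (Fin n)} {L : ℝ}
    {O : Set (EuclideanSpace ℝ (Fin n))}
    (hder : ∀ z ∈ O, HasGradientAt h (gh z) z)
    (hlip : ∀ z ∈ O, ∀ w ∈ O, ‖gh z - gh w‖ ≤ L * ‖z - w‖)
    {a b : EuclideanSpace ℝ (Fin n)}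
    (hseg : ∀ t ∈ Set.Icc (0:ℝ) 1, a + t • (b - a) ∈ O) :
    h b ≤ h a + ⟪gh a, b - a⟫ + L / 2 * ‖b - a‖ ^ 2 := by
  set d := b - a with hd
  set c : ℝ → EuclideanSpace ℝ (Fin n) := fun t => a + t • d with hc
  set ψ : ℝ → ℝ := fun t => h (c t) - t * ⟪gh a, d⟫ - L / 2 * t ^ 2 * ‖d‖ ^ 2 with hψ
  have hcder : ∀ t : ℝ, HasDerivAt c d t := by
    intro t
    have : HasDerivAt (fun s : ℝ => s • d) ((1:ℝ) • d) t := (hasDerivAt_id t).smul_const d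
    have h2 := this.const_add a
    rw [one_smul] at h2
    exact h2
  have hψd : ∀ t ∈ Set.Icc (0:ℝ) 1,
      HasDerivAt ψ (⟪gh (c t), d⟫ - ⟪gh a, d⟫ - L * t * ‖d‖ ^ 2) t := by
    intro t ht
    have h1 : HasDerivAt (fun s => h (c s)) ⟪gh (c t), d⟫ t := by
      have := ((hder _ (hseg t ht)).hasFDerivAt).comp_hasDerivAt t (hcder t)
      exact this
    have h2 : HasDerivAt (fun s : ℝ => s * ⟪gh a, d⟫) ⟪gh a, d⟫ t := by
      simpa using (hasDerivAt_id t).mul_const ⟪gh a, d⟫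
    have h3 : HasDerivAt (fun s : ℝ => L / 2 * s ^ 2 * ‖d‖ ^ 2) (L * t * ‖d‖ ^ 2) t := by
      have := ((hasDerivAt_pow 2 t).const_mul (L / 2)).mul_const (‖d‖ ^ 2)
      refine this.congr_deriv ?_
      norm_num only
      ring
    exact (h1.sub h2).sub h3
  have hanti : AntitoneOn ψ (Set.Icc (0:ℝ) 1) := by
    apply antitoneOn_of_deriv_nonpos (convex_Icc 0 1)
    · intro t ht
      exact ((hψd t ht).continuousAt).continuousWithinAt
    · intro t ht
      rw [interior_Icc] at ht
      exact ((hψd t (Set.mem_Icc_of_Ioo ht)).differentiableAt).differentiableWithinAt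
    · intro t ht
      rw [interior_Icc] at ht
      rw [(hψd t (Set.mem_Icc_of_Ioo ht)).deriv]
      have e1 : ⟪gh (c t), d⟫ - ⟪gh a, d⟫ = ⟪gh (c t) - gh a, d⟫ := (inner_sub_left _ _ _).symm
      have e2 : ⟪gh (c t) - gh a, d⟫ ≤ ‖gh (c t) - gh a‖ * ‖d‖ := real_inner_le_norm _ _
      have e3 : ‖gh (c t) - gh a‖ ≤ L * ‖c t - a‖ := by
        have h0 : a ∈ O := by simpa [hc] using hseg 0 (by norm_num)
        exact hlip _ (hseg t (Set.mem_Icc_of_Ioo ht)) _ h0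
      have e4 : ‖c t - a‖ = t * ‖d‖ := by
        have : c t - a = t • d := by simp [hc]
        rw [this, norm_smul, Real.norm_eq_abs, abs_of_pos ht.1]
      rw [e4] at e3
      have e5 := mul_le_mul_of_nonneg_right e3 (norm_nonneg d)
      rw [e1]
      nlinarith [e2, e5]
  have h01 := hanti (Set.left_mem_Icc.2 zero_le_one) (Set.right_mem_Icc.2 zero_le_one) zero_le_one
  have hc1 : c 1 = b := by simp [hc, hd]
  have hc0 : c 0 = a := by simp [hc]
  simp only [hψ, hc1, hc0] at h01
  nlinarith [h01]

theorem stmt4 {n p : ℕ}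
    (S : Set (EuclideanSpace ℝ (Fin n)))
    (g : EuclideanSpace ℝ (Fin n) → EReal)
    (h : EuclideanSpace ℝ (Fin n) → ℝ)
    (gh : EuclideanSpace ℝ (Fin n) → EuclideanSpace ℝ (Fin n))
    (f : EuclideanSpace ℝ (Fin p) → EReal)
    (K : EuclideanSpace ℝ (Fin n) →ₗ[ℝ] EuclideanSpace ℝ (Fin p))
    (L δ : ℝ)
    (hS : S.Nonempty) (hSconv : Convex ℝ S) (hScomp : IsCompact S)
    (hgP : ERealProper g) (hgconv : ERealConvex g) (hglsc : LowerSemicontinuous g)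
    (hfP : ERealProper f) (hfconv : ERealConvex f) (hflsc : LowerSemicontinuous f)
    (hL : 0 < L)
    (hhC1 : ∃ O : Set (EuclideanSpace ℝ (Fin n)), IsOpen O ∧ S ⊆ O ∧
      (∀ z ∈ O, HasGradientAt h (gh z) z) ∧
      (∀ z ∈ O, ∀ w ∈ O, ‖gh z - gh w‖ ≤ L * ‖z - w‖))
    (hKS : ∀ z ∈ S, K z ∈ interior (edom f))
    (hfpos : ∀ z ∈ S, (0 : EReal) < f (K z))
    (hghnn : ∀ z ∈ S, (0 : EReal) ≤ g z + ((h z : ℝ) : EReal))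
    (hSg : ∃ z ∈ S, g z ≠ ⊤)
    (hδ : 0 < δ) (hδL : δ < 1 / L)
    (σ : ℝ) (hσ : 0 < σ) (hσ2 : σ < 2)
    (x u : ℕ → EuclideanSpace ℝ (Fin n)) (y : ℕ → EuclideanSpace ℝ (Fin p)) (θ : ℕ → ℝ)
    (hxS : ∀ k, x k ∈ S ∧ g (x k) ≠ ⊤)
    (hy : ∀ k, y (k+1) ∈ csubdiff f (K (x k)))
    (hxmin : ∀ k, ∀ w ∈ S,
      g (x (k+1)) + (((2*δ)⁻¹ * ‖x (k+1) - u k + δ • gh (x k)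
          - (θ k * δ) • (LinearMap.adjoint K) (y (k+1))‖ ^ 2 : ℝ) : EReal)
        ≤ g w + (((2*δ)⁻¹ * ‖w - u k + δ • gh (x k)
          - (θ k * δ) • (LinearMap.adjoint K) (y (k+1))‖ ^ 2 : ℝ) : EReal))
    (hu : ∀ k, u (k+1) = (1 - σ) • u k + σ • x (k+1))
    (hθ : ∀ k, (θ k : EReal) = varthetaF S g h f K δ (x k) (u k))
    (hθnn : ∀ k, 0 ≤ θ k)
    :
    ∀ k : ℕ,
      phiF S g h δ (x (k+1)) (u (k+1)) - ((θ k : ℝ) : EReal) * f (K (x (k+1)))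
      ≤ -((((1 - δ * L) / (2 * δ)) * ‖x k - x (k+1)‖ ^ 2 : ℝ) : EReal)
        - ((((1 - (1 - σ) ^ 2) / (2 * σ ^ 2 * δ)) * ‖u k - u (k+1)‖ ^ 2 : ℝ) : EReal) := by
  intro k
  obtain ⟨O, hO, hSO, hder, hlip⟩ := hhC1
  have hδ' : δ ≠ 0 := ne_of_gt hδ
  have hx0S := (hxS k).1
  have hx1S := (hxS (k+1)).1
  set G0 := (g (x k)).toReal with hG0def
  set G1 := (g (x (k+1))).toReal with hG1def
  have hG0 : g (x k) = ((G0 : ℝ) : EReal) := (EReal.coe_toReal (hxS k).2 (hgP.1 _)).symm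
  have hG1 : g (x (k+1)) = ((G1 : ℝ) : EReal) := (EReal.coe_toReal (hxS (k+1)).2 (hgP.1 _)).symm
  have hf0top : f (K (x k)) ≠ ⊤ := interior_subset (hKS _ hx0S)
  have hf1top : f (K (x (k+1))) ≠ ⊤ := interior_subset (hKS _ hx1S)
  set F0 := (f (K (x k))).toReal with hF0def
  set F1 := (f (K (x (k+1)))).toReal with hF1def
  have hF0 : f (K (x k)) = ((F0 : ℝ) : EReal) := (EReal.coe_toReal hf0top (hfP.1 _)).symm
  have hF1 : f (K (x (k+1))) = ((F1 : ℝ) : EReal) := (EReal.coe_toReal hf1top (hfP.1 _)).symm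
  have hF0pos : 0 < F0 := by
    have h1 := hfpos _ hx0S
    rw [hF0] at h1
    exact_mod_cast h1
  -- theta identity
  have hθF : θ k * F0 = G0 + h (x k) + (2*δ)⁻¹ * ‖x k - u k‖^2 := by
    have h1 := hθ k
    unfold varthetaF phiF at h1
    rw [if_pos hx0S, hG0, hF0] at h1
    have hnum : ((G0 : ℝ) : EReal) + ((h (x k) : ℝ) : EReal) + (0 : EReal)
        + (((2 * δ)⁻¹ * ‖x k - u k‖ ^ 2 : ℝ) : EReal)
        = ((G0 + h (x k) + (2*δ)⁻¹ * ‖x k - u k‖^2 : ℝ) : EReal) := by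
      rw [add_zero]
      norm_cast
    rw [hnum, ← EReal.coe_div] at h1
    have h3 : θ k = (G0 + h (x k) + (2*δ)⁻¹ * ‖x k - u k‖^2) / F0 := by exact_mod_cast h1
    rw [h3, div_mul_cancel₀ _ (ne_of_gt hF0pos)]
  -- subgradient
  have hsub : F0 + ⟪y (k+1), K (x (k+1)) - K (x k)⟫ ≤ F1 := by
    have h1 := hy k (K (x (k+1)))
    rw [hF0, hF1] at h1
    exact_mod_cast h1
  -- descent
  have hdes : h (x (k+1)) ≤ h (x k) + ⟪gh (x k), x (k+1) - x k⟫
      + L/2 * ‖x (k+1) - x k‖^2 := by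
    apply my_descent hder hlip
    intro t ht
    have hpt : x k + t • (x (k+1) - x k) = (1 - t) • x k + t • x (k+1) := by module
    rw [hpt]
    exact hSO (hSconv hx0S hx1S (by linarith [ht.2]) ht.1 (by ring))
  -- prox geometry
  set e := δ • gh (x k) - (θ k * δ) • (LinearMap.adjoint K) (y (k+1)) with he
  set m := u k - e with hm
  have hform : ∀ w : EuclideanSpace ℝ (Fin n),
      w - u k + δ • gh (x k) - (θ k * δ) • (LinearMap.adjoint K) (y (k+1)) = w - m := by
    intro w
    rw [hm, he]
    module
  have hNw : ∀ w : EuclideanSpace ℝ (Fin n),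
      ‖w - m‖^2 = ‖w - u k‖^2 + 2*⟪w - u k, e⟫ + ‖e‖^2 := by
    intro w
    have hs : w - m = (w - u k) + e := by rw [hm]; abel
    rw [hs, norm_add_sq_real]
  have hIP : ⟪x (k+1) - u k, e⟫ - ⟪x k - u k, e⟫
      = δ * ⟪x (k+1) - x k, gh (x k)⟫
        - θ k * δ * ⟪y (k+1), K (x (k+1)) - K (x k)⟫ := by
    have h1 : ⟪x (k+1) - u k, e⟫ - ⟪x k - u k, e⟫ = ⟪x (k+1) - x k, e⟫ := by
      rw [← inner_sub_left]
      congr 1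
      abel
    rw [h1, he, inner_sub_right, real_inner_smul_right, real_inner_smul_right,
      LinearMap.adjoint_inner_right, map_sub,
      real_inner_comm (K (x (k+1)) - K (x k)) (y (k+1))]
  -- strong convexity of prox
  have key : G1 + (2*δ)⁻¹*‖x (k+1) - m‖^2
      ≤ (G0 + (2*δ)⁻¹*‖x k - m‖^2) - (2*δ)⁻¹*‖x (k+1) - x k‖^2 := by
    apply limit_lemma
    intro l hl
    obtain ⟨hl0, hl1⟩ := hl
    set w := (1-l) • x (k+1) + l • x k with hw
    have hwS : w ∈ S := hSconv hx1S hx0S (by linarith) hl0.le (by ring)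
    have hgw := hgconv (x (k+1)) (x k) (1-l) l (by linarith) hl0.le (by ring)
    rw [hG0, hG1] at hgw
    have hgw' : g w ≤ (((1-l)*G1 + l*G0 : ℝ) : EReal) := by
      refine le_trans hgw ?_
      norm_cast
    have hgwt : g w ≠ ⊤ := (lt_of_le_of_lt hgw' (EReal.coe_lt_top _)).ne
    have hGw : g w = (((g w).toReal : ℝ) : EReal) := (EReal.coe_toReal hgwt (hgP.1 _)).symm
    have hGwle : (g w).toReal ≤ (1-l)*G1 + l*G0 := by
      rw [hGw] at hgw'
      exact_mod_cast hgw'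
    have hxm := hxmin k w hwS
    simp only [hform] at hxm
    rw [hG1, hGw] at hxm
    have hxm' : G1 + (2*δ)⁻¹*‖x (k+1) - m‖^2
        ≤ (g w).toReal + (2*δ)⁻¹*‖w - m‖^2 := by exact_mod_cast hxm
    have hwm : w - m = (1-l) • (x (k+1) - m) + l • (x k - m) := by rw [hw]; module
    have hcn : ‖w - m‖^2 = (1-l)*‖x (k+1) - m‖^2 + l*‖x k - m‖^2
        - l*(1-l)*‖(x (k+1) - m) - (x k - m)‖^2 := by rw [hwm, comb_norm_sq]
    have hxx : (x (k+1) - m) - (x k - m) = x (k+1) - x k := by abel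
    rw [hxx] at hcn
    rw [hcn] at hxm'
    have comb : G1 + (2*δ)⁻¹*‖x (k+1) - m‖^2
        ≤ (1-l)*G1 + l*G0 + (2*δ)⁻¹*((1-l)*‖x (k+1) - m‖^2 + l*‖x k - m‖^2
          - l*(1-l)*‖x (k+1) - x k‖^2) := by linarith [hxm', hGwle]
    have hmul : l * (G1 + (2*δ)⁻¹*‖x (k+1) - m‖^2)
        ≤ l * ((G0 + (2*δ)⁻¹*‖x k - m‖^2) - (1-l)*((2*δ)⁻¹*‖x (k+1) - x k‖^2)) := by
      nlinarith [comb]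
    exact le_of_mul_le_mul_left hmul hl0
  -- difference expansion
  have hdiff : (2*δ)⁻¹*‖x (k+1) - m‖^2 - (2*δ)⁻¹*‖x k - m‖^2
      = (2*δ)⁻¹*‖x (k+1) - u k‖^2 - (2*δ)⁻¹*‖x k - u k‖^2
        + ⟪x (k+1) - x k, gh (x k)⟫ - θ k * ⟪y (k+1), K (x (k+1)) - K (x k)⟫ := by
    rw [hNw, hNw]
    have h2δ : (2*δ)⁻¹ * (2*δ) = 1 := inv_mul_cancel₀ (by positivity)
    linear_combination (2*(2*δ)⁻¹) * hIP
      + (⟪x (k+1) - x k, gh (x k)⟫ - θ k * ⟪y (k+1), K (x (k+1)) - K (x k)⟫) * h2δ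
  -- u update
  have hu1n : ‖x (k+1) - u (k+1)‖^2 = (1-σ)^2 * ‖x (k+1) - u k‖^2 := by
    have h1 : x (k+1) - u (k+1) = (1-σ) • (x (k+1) - u k) := by rw [hu k]; module
    rw [h1, norm_smul, Real.norm_eq_abs, mul_pow, sq_abs]
  have hu2n : ‖u k - u (k+1)‖^2 = σ^2 * ‖x (k+1) - u k‖^2 := by
    have h1 : u k - u (k+1) = σ • (u k - x (k+1)) := by rw [hu k]; module
    rw [h1, norm_smul, Real.norm_eq_abs, mul_pow, sq_abs, norm_sub_rev]
  have hcomm1 : ⟪gh (x k), x (k+1) - x k⟫ = ⟪x (k+1) - x k, gh (x k)⟫ := real_inner_comm _ _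
  have hsubθ : θ k * F0 + θ k * ⟪y (k+1), K (x (k+1)) - K (x k)⟫ ≤ θ k * F1 := by
    nlinarith [mul_le_mul_of_nonneg_left hsub (hθnn k)]
  have e1 : (1-δ*L)/(2*δ) * ‖x k - x (k+1)‖^2
      = ((2*δ)⁻¹ - L/2) * ‖x (k+1) - x k‖^2 := by
    rw [norm_sub_rev]
    field_simp
  have e2 : (1-(1-σ)^2)/(2*σ^2*δ) * ‖u k - u (k+1)‖^2
      = ((2*δ)⁻¹ - (2*δ)⁻¹*(1-σ)^2) * ‖x (k+1) - u k‖^2 := by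
    rw [hu2n]
    field_simp
  have hreal : G1 + h (x (k+1)) + (2*δ)⁻¹ * ‖x (k+1) - u (k+1)‖^2 - θ k * F1
      ≤ -((1-δ*L)/(2*δ) * ‖x k - x (k+1)‖^2)
        - ((1-(1-σ)^2)/(2*σ^2*δ) * ‖u k - u (k+1)‖^2) := by
    rw [e1, e2, hu1n]
    linarith [key, hdiff, hdes, hsubθ, hθF, hcomm1]
  unfold phiF
  rw [if_pos hx1S, hG1, hF1]
  have hreal' : G1 + h (x (k+1)) + 0 + (2*δ)⁻¹ * ‖x (k+1) - u (k+1)‖^2 - θ k * F1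
      ≤ -((1-δ*L)/(2*δ) * ‖x k - x (k+1)‖^2)
        - ((1-(1-σ)^2)/(2*σ^2*δ) * ‖u k - u (k+1)‖^2) := by linarith
  exact_mod_cast hreal'
end
end

section
/- (Theorem 3.3(i)) Let the sequences (xᵏ, yᵏ, uᵏ, θ_k) be generated by the FPSA iteration, and let 0 < m ≤ f(Kxᵏ) ≤ M for all k. Then θ_{k+1} ≤ θ_k − (ϱ₁/M)‖xᵏ − xᵏ⁺¹‖² − (ϱ₂/M)‖uᵏ − uᵏ⁺¹‖² for all k; consequently (θ_k) is nonincreasing and converges to some limit θ̄ ≥ 0, and ‖xᵏ − xᵏ⁺¹‖ → 0 and ‖uᵏ − uᵏ⁺¹‖ → 0 as k → ∞. -/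
open Filter Metric Set RealInnerProductSpace
open scoped Topology Classical

noncomputable section

section Helpers
open intervalIntegral

lemma my_norm_combo_sq {E : Type*} [NormedAddCommGroup E] [InnerProductSpace ℝ E]
    (p q : E) (t : ℝ) :
    ‖(1-t) • p + t • q‖^2 = (1-t)*‖p‖^2 + t*‖q‖^2 - t*(1-t)*‖p - q‖^2 := by
  simp only [← real_inner_self_eq_norm_sq, inner_add_left, inner_add_right,
    inner_sub_left, inner_sub_right, real_inner_smul_left, real_inner_smul_right]
  have hc := real_inner_comm p q
  ring_nf

lemma my_descent_lemma {E : Type*} [NormedAddCommGroup E] [InnerProductSpace ℝ E]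
    [CompleteSpace E]
    {O : Set E} {h : E → ℝ} {gh : E → E} {L : ℝ} (hL : 0 ≤ L)
    (hgrad : ∀ z ∈ O, HasGradientAt h (gh z) z)
    (hlip : ∀ z ∈ O, ∀ w ∈ O, ‖gh z - gh w‖ ≤ L * ‖z - w‖)
    {x z : E} (hseg : ∀ t ∈ Set.Icc (0:ℝ) 1, x + t • (z - x) ∈ O) :
    h z ≤ h x + ⟪gh x, z - x⟫ + L / 2 * ‖z - x‖ ^ 2 := by
  set γ : ℝ → E := fun t => x + t • (z - x) with hγ
  have hγd : ∀ t : ℝ, HasDerivAt γ (z - x) t := by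
    intro t
    simpa [hγ] using ((hasDerivAt_id t).smul_const (z - x)).const_add x
  set ψ' : ℝ → ℝ := fun t => ⟪gh (γ t), z - x⟫ with hψ'
  have huIcc : Set.uIcc (0:ℝ) 1 = Set.Icc 0 1 := by
    rw [Set.uIcc_of_le]; norm_num
  have hderiv : ∀ t ∈ Set.uIcc (0:ℝ) 1, HasDerivAt (fun s => h (γ s)) (ψ' t) t := by
    intro t ht
    rw [huIcc] at ht
    have hg := (hgrad _ (hseg t ht)).hasFDerivAt
    have := hg.comp_hasDerivAt t (hγd t)
    simpa [hψ', InnerProductSpace.toDual_apply_apply, Function.comp_def, hγ] using this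
  have hlipOn : LipschitzOnWith (Real.toNNReal L) gh O := by
    apply LipschitzOnWith.of_dist_le_mul
    intro a ha b hb
    rw [dist_eq_norm, dist_eq_norm]
    calc ‖gh a - gh b‖ ≤ L * ‖a - b‖ := hlip a ha b hb
      _ = Real.toNNReal L * ‖a - b‖ := by rw [Real.coe_toNNReal _ hL]
  have hγc : Continuous γ := by
    apply continuous_const.add (continuous_id.smul continuous_const)
  have hψ'c : ContinuousOn ψ' (Set.Icc 0 1) := by
    apply ContinuousOn.inner
    · exact hlipOn.continuousOn.comp hγc.continuousOn (fun t ht => hseg t ht)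
    · exact continuousOn_const
  have hInt : IntervalIntegrable ψ' MeasureTheory.volume 0 1 := by
    apply ContinuousOn.intervalIntegrable
    rwa [huIcc]
  have hftc : ∫ t in (0:ℝ)..1, ψ' t = h (γ 1) - h (γ 0) :=
    integral_eq_sub_of_hasDerivAt hderiv hInt
  have hγ0 : γ 0 = x := by simp [hγ]
  have hγ1 : γ 1 = z := by simp [hγ]
  have hbound : ∫ t in (0:ℝ)..1, ψ' t
      ≤ ∫ t in (0:ℝ)..1, (⟪gh x, z - x⟫ + (L * ‖z - x‖ ^ 2) * t) := by
    apply integral_mono_on (by norm_num) hInt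
    · apply ContinuousOn.intervalIntegrable
      apply Continuous.continuousOn; continuity
    · intro t ht
      have h1 : ψ' t = ⟪gh x, z - x⟫ + ⟪gh (γ t) - gh x, z - x⟫ := by
        simp [hψ', inner_sub_left]
      rw [h1]
      gcongr _ + ?_
      calc ⟪gh (γ t) - gh x, z - x⟫ ≤ ‖gh (γ t) - gh x‖ * ‖z - x‖ := real_inner_le_norm _ _
        _ ≤ (L * ‖γ t - x‖) * ‖z - x‖ := by
            have hx0 : x ∈ O := by simpa using hseg 0 (by norm_num)
            gcongr
            exact hlip _ (hseg t ht) _ hx0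
        _ = (L * ‖z - x‖ ^ 2) * t := by
            have : ‖γ t - x‖ = t * ‖z - x‖ := by
              simp only [hγ, add_sub_cancel_left, norm_smul, Real.norm_eq_abs,
                abs_of_nonneg ht.1]
            rw [this]; ring
  have hrhs : ∫ t in (0:ℝ)..1, (⟪gh x, z - x⟫ + (L * ‖z - x‖ ^ 2) * t)
      = ⟪gh x, z - x⟫ + L / 2 * ‖z - x‖ ^ 2 := by
    rw [integral_add (intervalIntegrable_const) (by
      apply Continuous.intervalIntegrable; continuity)]
    rw [integral_const, integral_const_mul, integral_id]
    norm_num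
    ring
  have := hbound
  rw [hftc, hγ0, hγ1, hrhs] at this
  linarith

end Helpers

set_option maxHeartbeats 1000000 in
theorem stmt6 {n p : ℕ}
    (S : Set (EuclideanSpace ℝ (Fin n)))
    (g : EuclideanSpace ℝ (Fin n) → EReal)
    (h : EuclideanSpace ℝ (Fin n) → ℝ)
    (gh : EuclideanSpace ℝ (Fin n) → EuclideanSpace ℝ (Fin n))
    (f : EuclideanSpace ℝ (Fin p) → EReal)
    (K : EuclideanSpace ℝ (Fin n) →ₗ[ℝ] EuclideanSpace ℝ (Fin p))
    (L δ : ℝ)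
    (hS : S.Nonempty) (hSconv : Convex ℝ S) (hScomp : IsCompact S)
    (hgP : ERealProper g) (hgconv : ERealConvex g) (hglsc : LowerSemicontinuous g)
    (hfP : ERealProper f) (hfconv : ERealConvex f) (hflsc : LowerSemicontinuous f)
    (hL : 0 < L)
    (hhC1 : ∃ O : Set (EuclideanSpace ℝ (Fin n)), IsOpen O ∧ S ⊆ O ∧
      (∀ z ∈ O, HasGradientAt h (gh z) z) ∧
      (∀ z ∈ O, ∀ w ∈ O, ‖gh z - gh w‖ ≤ L * ‖z - w‖))
    (hKS : ∀ z ∈ S, K z ∈ interior (edom f))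
    (hfpos : ∀ z ∈ S, (0 : EReal) < f (K z))
    (hghnn : ∀ z ∈ S, (0 : EReal) ≤ g z + ((h z : ℝ) : EReal))
    (hSg : ∃ z ∈ S, g z ≠ ⊤)
    (hδ : 0 < δ) (hδL : δ < 1 / L)
    (σ : ℝ) (hσ : 0 < σ) (hσ2 : σ < 2)
    (x u : ℕ → EuclideanSpace ℝ (Fin n)) (y : ℕ → EuclideanSpace ℝ (Fin p)) (θ : ℕ → ℝ)
    (hxS : ∀ k, x k ∈ S ∧ g (x k) ≠ ⊤)
    (hy : ∀ k, y (k+1) ∈ csubdiff f (K (x k)))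
    (hxmin : ∀ k, ∀ w ∈ S,
      g (x (k+1)) + (((2*δ)⁻¹ * ‖x (k+1) - u k + δ • gh (x k)
          - (θ k * δ) • (LinearMap.adjoint K) (y (k+1))‖ ^ 2 : ℝ) : EReal)
        ≤ g w + (((2*δ)⁻¹ * ‖w - u k + δ • gh (x k)
          - (θ k * δ) • (LinearMap.adjoint K) (y (k+1))‖ ^ 2 : ℝ) : EReal))
    (hu : ∀ k, u (k+1) = (1 - σ) • u k + σ • x (k+1))
    (hθ : ∀ k, (θ k : EReal) = varthetaF S g h f K δ (x k) (u k))
    (hθnn : ∀ k, 0 ≤ θ k)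
    (m M : ℝ) (hm : 0 < m)
    (hmM : ∀ k, (m : EReal) ≤ f (K (x k)) ∧ f (K (x k)) ≤ (M : EReal))
    :
    (∀ k : ℕ, θ (k+1) ≤ θ k
        - ((1 - δ * L) / (2 * δ)) / M * ‖x k - x (k+1)‖ ^ 2
        - ((1 - (1 - σ) ^ 2) / (2 * σ ^ 2 * δ)) / M * ‖u k - u (k+1)‖ ^ 2)
    ∧ (∀ k : ℕ, θ (k+1) ≤ θ k)
    ∧ (∃ θbar : ℝ, 0 ≤ θbar ∧ Tendsto θ atTop (𝓝 θbar))
    ∧ Tendsto (fun k => ‖x k - x (k+1)‖) atTop (𝓝 0)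
    ∧ Tendsto (fun k => ‖u k - u (k+1)‖) atTop (𝓝 0) := by
  classical
  obtain ⟨O, hOopen, hSO, hgrad, hlip⟩ := hhC1
  -- Finiteness of f along the iterates
  have hfne : ∀ k, f (K (x k)) = (((f (K (x k))).toReal : ℝ) : EReal) := by
    intro k
    refine (EReal.coe_toReal ?_ (hfP.1 _)).symm
    intro htop
    have h2 := (hmM k).2
    rw [htop] at h2
    exact EReal.coe_ne_top M (top_le_iff.mp h2)
  set F : ℕ → ℝ := fun k => (f (K (x k))).toReal with hFdef
  have hgne : ∀ k, g (x k) = (((g (x k)).toReal : ℝ) : EReal) := fun k =>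
    (EReal.coe_toReal (hxS k).2 (hgP.1 _)).symm
  set G : ℕ → ℝ := fun k => (g (x k)).toReal with hGdef
  have hFm : ∀ k, m ≤ F k := by
    intro k
    have h2 := (hmM k).1
    rw [hfne k] at h2
    exact_mod_cast h2
  have hFM : ∀ k, F k ≤ M := by
    intro k
    have h2 := (hmM k).2
    rw [hfne k] at h2
    exact_mod_cast h2
  have hMpos : 0 < M := lt_of_lt_of_le hm (le_trans (hFm 0) (hFM 0))
  have hFpos : ∀ k, 0 < F k := fun k => lt_of_lt_of_le hm (hFm k)
  have h2δ : 0 < 2 * δ := by linarith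
  -- θ in terms of real quantities
  set φv : ℕ → ℝ := fun k => G k + h (x k) + (2*δ)⁻¹ * ‖x k - u k‖^2 with hφvdef
  have hθeq : ∀ k, θ k = φv k / F k := by
    intro k
    have h1 := hθ k
    rw [varthetaF, phiF, if_pos (hxS k).1, hgne k, hfne k] at h1
    have h2 : ((G k : ℝ) : EReal) + ((h (x k) : ℝ) : EReal) + 0
        + (((2*δ)⁻¹ * ‖x k - u k‖^2 : ℝ) : EReal) = ((φv k : ℝ) : EReal) := by
      rw [add_zero]
      norm_cast
    rw [h2, ← EReal.coe_div] at h1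
    exact_mod_cast h1
  have hφθ : ∀ k, φv k = θ k * F k := by
    intro k
    rw [hθeq k]
    exact (div_mul_cancel₀ _ (ne_of_gt (hFpos k))).symm
  -- positivity of the two moduli
  have hδL1 : δ * L < 1 := by
    rw [lt_div_iff₀ hL] at hδL
    linarith
  have hρ1 : 0 < (1 - δ*L)/(2*δ) := div_pos (by linarith) h2δ
  have hρ2 : 0 < (1 - (1-σ)^2)/(2*σ^2*δ) :=
    div_pos (by nlinarith) (mul_pos (mul_pos two_pos (pow_pos hσ 2)) hδ)
  -- THE KEY PER-STEP INEQUALITY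
  have hkey : ∀ k : ℕ, θ (k+1) ≤ θ k
      - ((1 - δ * L) / (2 * δ)) / M * ‖x k - x (k+1)‖ ^ 2
      - ((1 - (1 - σ) ^ 2) / (2 * σ ^ 2 * δ)) / M * ‖u k - u (k+1)‖ ^ 2 := by
    intro k
    have haS := (hxS k).1
    have hbS := (hxS (k+1)).1
    have hδ0 : δ ≠ 0 := ne_of_gt hδ
    have hσ0 : σ ≠ 0 := ne_of_gt hσ
    set d : EuclideanSpace ℝ (Fin n) :=
      δ • gh (x k) - (θ k * δ) • (LinearMap.adjoint K) (y (k+1)) with hd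
    have he : ∀ w : EuclideanSpace ℝ (Fin n),
        w - u k + δ • gh (x k) - (θ k * δ) • (LinearMap.adjoint K) (y (k+1))
          = (w - u k) + d := by
      intro w; rw [hd]; abel
    -- Step 1: strongly convex prox inequality
    have step1 : G (k+1) + (2*δ)⁻¹ * ‖(x (k+1) - u k) + d‖^2
          + (2*δ)⁻¹ * ‖x (k+1) - x k‖^2
        ≤ G k + (2*δ)⁻¹ * ‖(x k - u k) + d‖^2 := by
      have hQ : ∀ t ∈ Set.Ioc (0:ℝ) 1,
          G (k+1) + (2*δ)⁻¹ * ‖(x (k+1) - u k) + d‖^2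
            + (1-t) * ((2*δ)⁻¹ * ‖x (k+1) - x k‖^2)
          ≤ G k + (2*δ)⁻¹ * ‖(x k - u k) + d‖^2 := by
        intro t ht
        have ht0 : 0 ≤ 1 - t := by linarith [ht.2]
        have hwS : (1-t) • x (k+1) + t • x k ∈ S :=
          hSconv hbS haS ht0 ht.1.le (by ring)
        have hmin := hxmin k _ hwS
        rw [he (x (k+1)), he ((1-t) • x (k+1) + t • x k)] at hmin
        have hcv := hgconv (x (k+1)) (x k) (1-t) t ht0 ht.1.le (by ring)
        rw [hgne k, hgne (k+1)] at hcv
        have hwd : (((1-t) • x (k+1) + t • x k) - u k) + d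
            = (1-t) • ((x (k+1) - u k) + d) + t • ((x k - u k) + d) := by
          module
        have hpq : ((x (k+1) - u k) + d) - ((x k - u k) + d) = x (k+1) - x k := by abel
        have hnw : ‖(((1-t) • x (k+1) + t • x k) - u k) + d‖^2
            = (1-t)*‖(x (k+1) - u k) + d‖^2 + t*‖(x k - u k) + d‖^2
              - t*(1-t)*‖x (k+1) - x k‖^2 := by
          rw [hwd, my_norm_combo_sq, hpq]
        have hereal : ((G (k+1) : ℝ) : EReal)
              + (((2*δ)⁻¹ * ‖(x (k+1) - u k) + d‖^2 : ℝ) : EReal)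
            ≤ (((1-t) * G (k+1) + t * G k
              + (2*δ)⁻¹ * ‖(((1-t) • x (k+1) + t • x k) - u k) + d‖^2 : ℝ) : EReal) := by
          rw [← hgne (k+1)]
          calc g (x (k+1)) + (((2*δ)⁻¹ * ‖(x (k+1) - u k) + d‖^2 : ℝ) : EReal)
              ≤ g ((1-t) • x (k+1) + t • x k)
                + (((2*δ)⁻¹ * ‖(((1-t) • x (k+1) + t • x k) - u k) + d‖^2 : ℝ) : EReal) := hmin
            _ ≤ ((1-t : ℝ) : EReal) * ((G (k+1) : ℝ) : EReal)
                  + ((t : ℝ) : EReal) * ((G k : ℝ) : EReal)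
                + (((2*δ)⁻¹ * ‖(((1-t) • x (k+1) + t • x k) - u k) + d‖^2 : ℝ) : EReal) :=
                add_le_add_left hcv _
            _ = _ := by norm_cast
        have hr : G (k+1) + (2*δ)⁻¹ * ‖(x (k+1) - u k) + d‖^2
            ≤ (1-t) * G (k+1) + t * G k
              + (2*δ)⁻¹ * ‖(((1-t) • x (k+1) + t • x k) - u k) + d‖^2 := by
          exact_mod_cast hereal
        rw [hnw] at hr
        have hfac : ((1-t) * G (k+1) + t * G k
              + (2*δ)⁻¹ * ((1-t)*‖(x (k+1) - u k) + d‖^2 + t*‖(x k - u k) + d‖^2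
                - t*(1-t)*‖x (k+1) - x k‖^2))
            - (G (k+1) + (2*δ)⁻¹ * ‖(x (k+1) - u k) + d‖^2)
            = t * ((G k + (2*δ)⁻¹ * ‖(x k - u k) + d‖^2)
              - (G (k+1) + (2*δ)⁻¹ * ‖(x (k+1) - u k) + d‖^2
                + (1-t) * ((2*δ)⁻¹ * ‖x (k+1) - x k‖^2))) := by ring
        have hnn : 0 ≤ t * ((G k + (2*δ)⁻¹ * ‖(x k - u k) + d‖^2)
              - (G (k+1) + (2*δ)⁻¹ * ‖(x (k+1) - u k) + d‖^2
                + (1-t) * ((2*δ)⁻¹ * ‖x (k+1) - x k‖^2))) := by linarith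
        have := (mul_nonneg_iff_of_pos_left ht.1).mp hnn
        linarith
      have hten : Tendsto (fun t : ℝ => G (k+1) + (2*δ)⁻¹ * ‖(x (k+1) - u k) + d‖^2
            + (1-t) * ((2*δ)⁻¹ * ‖x (k+1) - x k‖^2))
          (𝓝[>] (0:ℝ)) (𝓝 (G (k+1) + (2*δ)⁻¹ * ‖(x (k+1) - u k) + d‖^2
            + (1-(0:ℝ)) * ((2*δ)⁻¹ * ‖x (k+1) - x k‖^2))) := by
        apply Tendsto.mono_left _ nhdsWithin_le_nhds
        exact Continuous.tendsto (by fun_prop) 0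
      have hev : ∀ᶠ t in 𝓝[>] (0:ℝ),
          G (k+1) + (2*δ)⁻¹ * ‖(x (k+1) - u k) + d‖^2
            + (1-t) * ((2*δ)⁻¹ * ‖x (k+1) - x k‖^2)
          ≤ G k + (2*δ)⁻¹ * ‖(x k - u k) + d‖^2 :=
        Filter.eventually_of_mem
          (Ioc_mem_nhdsGT_of_mem (by norm_num : (0:ℝ) ∈ Set.Ico (0:ℝ) 1)) hQ
      have := le_of_tendsto hten hev
      linarith
    -- Step 2: expand the squared norms
    have hexp : ∀ w : EuclideanSpace ℝ (Fin n),
        ‖(w - u k) + d‖^2 = ‖w - u k‖^2 + 2*⟪w - u k, d⟫ + ‖d‖^2 := fun w =>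
      norm_add_sq_real _ _
    have hinner : ⟪x (k+1) - u k, d⟫ - ⟪x k - u k, d⟫
        = δ * ⟪x (k+1) - x k, gh (x k)⟫
          - (θ k * δ) * ⟪y (k+1), K (x (k+1)) - K (x k)⟫ := by
      rw [← inner_sub_left]
      have h1 : (x (k+1) - u k) - (x k - u k) = x (k+1) - x k := by abel
      rw [h1, hd, inner_sub_right, real_inner_smul_right, real_inner_smul_right,
        LinearMap.adjoint_inner_right, map_sub,
        real_inner_comm (K (x (k+1)) - K (x k)) (y (k+1))]
    have hsimp1 : 2*(2*δ)⁻¹*(⟪x (k+1) - u k, d⟫ - ⟪x k - u k, d⟫)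
        = ⟪x (k+1) - x k, gh (x k)⟫ - θ k * ⟪y (k+1), K (x (k+1)) - K (x k)⟫ := by
      rw [hinner]
      field_simp
    -- Step 3: descent lemma for h
    have hseg : ∀ t ∈ Set.Icc (0:ℝ) 1, x k + t • (x (k+1) - x k) ∈ O := by
      intro t ht
      apply hSO
      have h1 : x k + t • (x (k+1) - x k) = (1-t) • x k + t • x (k+1) := by module
      rw [h1]
      exact hSconv haS hbS (by linarith [ht.2]) ht.1 (by ring)
    have hdl : h (x (k+1)) ≤ h (x k) + ⟪gh (x k), x (k+1) - x k⟫
        + L/2 * ‖x (k+1) - x k‖^2 := my_descent_lemma hL.le hgrad hlip hseg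
    have hcomm : ⟪gh (x k), x (k+1) - x k⟫ = ⟪x (k+1) - x k, gh (x k)⟫ :=
      real_inner_comm _ _
    -- Step 4: subgradient inequality
    have hsub : F k + ⟪y (k+1), K (x (k+1)) - K (x k)⟫ ≤ F (k+1) := by
      have h1 := hy k (K (x (k+1)))
      rw [hfne k, hfne (k+1)] at h1
      exact_mod_cast h1
    have hmul : θ k * ⟪y (k+1), K (x (k+1)) - K (x k)⟫ ≤ θ k * (F (k+1) - F k) :=
      mul_le_mul_of_nonneg_left (by linarith) (hθnn k)
    -- Step 5: combine: φ(x^{k+1},u^k)-type bound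
    have hc2L : (2*δ)⁻¹ - L/2 = (1-δ*L)/(2*δ) := by field_simp
    have step5 : G (k+1) + h (x (k+1)) + (2*δ)⁻¹ * ‖x (k+1) - u k‖^2
        ≤ θ k * F (k+1) - ((1-δ*L)/(2*δ)) * ‖x (k+1) - x k‖^2 := by
      rw [hexp (x (k+1)), hexp (x k)] at step1
      have hc2LD : ((1-δ*L)/(2*δ)) * ‖x (k+1) - x k‖^2
          = (2*δ)⁻¹ * ‖x (k+1) - x k‖^2 - L/2 * ‖x (k+1) - x k‖^2 := by
        rw [← hc2L]; ring
      have hφk := hφθ k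
      have hφkdef : φv k = G k + h (x k) + (2*δ)⁻¹ * ‖x k - u k‖^2 := rfl
      have sA : G (k+1) + (2*δ)⁻¹ * ‖x (k+1) - u k‖^2 + (2*δ)⁻¹ * ‖x (k+1) - x k‖^2
          + ⟪x (k+1) - x k, gh (x k)⟫ - θ k * ⟪y (k+1), K (x (k+1)) - K (x k)⟫
          ≤ G k + (2*δ)⁻¹ * ‖x k - u k‖^2 := by linarith [step1, hsimp1]
      have sB : G (k+1) + h (x (k+1)) + (2*δ)⁻¹ * ‖x (k+1) - u k‖^2
          + (2*δ)⁻¹ * ‖x (k+1) - x k‖^2 - θ k * ⟪y (k+1), K (x (k+1)) - K (x k)⟫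
          ≤ G k + h (x k) + (2*δ)⁻¹ * ‖x k - u k‖^2 + L/2 * ‖x (k+1) - x k‖^2 := by
        linarith [sA, hdl, hcomm]
      have sC : G k + h (x k) + (2*δ)⁻¹ * ‖x k - u k‖^2 = θ k * F k := by
        rw [← hφkdef]; exact hφk
      have sD : θ k * ⟪y (k+1), K (x (k+1)) - K (x k)⟫ ≤ θ k * F (k+1) - θ k * F k := by
        linarith [hmul]
      linarith [sB, sC, sD, hc2LD]
    -- Step 6: u-update identity
    have hu1 : ‖x (k+1) - u (k+1)‖^2 = (1-σ)^2 * ‖x (k+1) - u k‖^2 := by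
      have h1 : x (k+1) - u (k+1) = (1-σ) • (x (k+1) - u k) := by rw [hu k]; module
      rw [h1, norm_smul, Real.norm_eq_abs, mul_pow, sq_abs]
    have hu2 : ‖u k - u (k+1)‖^2 = σ^2 * ‖x (k+1) - u k‖^2 := by
      have h1 : u k - u (k+1) = σ • (u k - x (k+1)) := by rw [hu k]; module
      rw [h1, norm_smul, Real.norm_eq_abs, mul_pow, sq_abs, norm_sub_rev]
    have hcoef : (2*δ)⁻¹ = (2*δ)⁻¹ * (1-σ)^2 + ((1-(1-σ)^2)/(2*σ^2*δ)) * σ^2 := by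
      field_simp
      ring
    have step6 : (2*δ)⁻¹ * ‖x (k+1) - u k‖^2
        = (2*δ)⁻¹ * ‖x (k+1) - u (k+1)‖^2
          + ((1-(1-σ)^2)/(2*σ^2*δ)) * ‖u k - u (k+1)‖^2 := by
      rw [hu1, hu2]
      linear_combination (‖x (k+1) - u k‖^2) * hcoef
    -- Step 7: divide by F(k+1)
    have hφ1 : θ (k+1) * F (k+1) = G (k+1) + h (x (k+1))
        + (2*δ)⁻¹ * ‖x (k+1) - u (k+1)‖^2 := (hφθ (k+1)).symm
    have hF1 := hFpos (k+1)
    have h6 : θ (k+1) * F (k+1) ≤ θ k * F (k+1)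
        - (((1-δ*L)/(2*δ)) * ‖x (k+1) - x k‖^2
          + ((1-(1-σ)^2)/(2*σ^2*δ)) * ‖u k - u (k+1)‖^2) := by
      rw [hφ1]
      linarith [step5, step6]
    set s : ℝ := ((1-δ*L)/(2*δ)) * ‖x (k+1) - x k‖^2
      + ((1-(1-σ)^2)/(2*σ^2*δ)) * ‖u k - u (k+1)‖^2 with hs
    have hsnn : 0 ≤ s :=
      add_nonneg (mul_nonneg hρ1.le (sq_nonneg _)) (mul_nonneg hρ2.le (sq_nonneg _))
    have h7 : θ (k+1) ≤ (θ k * F (k+1) - s)/F (k+1) := (le_div_iff₀ hF1).mpr h6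
    have h8 : (θ k * F (k+1) - s)/F (k+1) = θ k - s/F (k+1) := by
      field_simp
    have h9 : s/M ≤ s/F (k+1) := div_le_div_of_nonneg_left hsnn hF1 (hFM (k+1))
    have h10 : s/M = ((1-δ*L)/(2*δ))/M * ‖x (k+1) - x k‖^2
        + ((1-(1-σ)^2)/(2*σ^2*δ))/M * ‖u k - u (k+1)‖^2 := by
      rw [hs]; ring
    have hxrev : ‖x k - x (k+1)‖ = ‖x (k+1) - x k‖ := norm_sub_rev _ _
    rw [hxrev]
    linarith
  -- assemble the conclusions
  have hXnn : ∀ k, 0 ≤ ((1 - δ*L)/(2*δ))/M * ‖x k - x (k+1)‖^2 := fun k =>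
    mul_nonneg (div_nonneg hρ1.le hMpos.le) (sq_nonneg _)
  have hUnn : ∀ k, 0 ≤ ((1 - (1-σ)^2)/(2*σ^2*δ))/M * ‖u k - u (k+1)‖^2 := fun k =>
    mul_nonneg (div_nonneg hρ2.le hMpos.le) (sq_nonneg _)
  have hantistep : ∀ k, θ (k+1) ≤ θ k := by
    intro k
    have := hkey k
    have h1 := hXnn k
    have h2 := hUnn k
    linarith
  have hanti : Antitone θ := antitone_nat_of_succ_le hantistep
  have hbdd : BddBelow (Set.range θ) := ⟨0, by rintro _ ⟨k, rfl⟩; exact hθnn k⟩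
  have htend : Tendsto θ atTop (𝓝 (⨅ k, θ k)) := tendsto_atTop_ciInf hanti hbdd
  have hdiff : Tendsto (fun k => θ k - θ (k+1)) atTop (𝓝 0) := by
    have h2 : Tendsto (fun k => θ (k+1)) atTop (𝓝 (⨅ k, θ k)) :=
      htend.comp (tendsto_add_atTop_nat 1)
    simpa using htend.sub h2
  have limaux : ∀ (v : ℕ → EuclideanSpace ℝ (Fin n)) (c : ℝ), 0 < c →
      (∀ k, c * ‖v k - v (k+1)‖^2 ≤ θ k - θ (k+1)) →
      Tendsto (fun k => ‖v k - v (k+1)‖) atTop (𝓝 0) := by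
    intro v c hc hle
    have hsq : Tendsto (fun k => c * ‖v k - v (k+1)‖^2) atTop (𝓝 0) := by
      apply squeeze_zero (fun k => by positivity) hle hdiff
    have hsq2 : Tendsto (fun k => ‖v k - v (k+1)‖^2) atTop (𝓝 0) := by
      have h3 := hsq.const_mul c⁻¹
      simpa [← mul_assoc, inv_mul_cancel₀ (ne_of_gt hc)] using h3
    have h4 := hsq2.sqrt
    simpa [Real.sqrt_sq (norm_nonneg _)] using h4
  refine ⟨hkey, hantistep, ⟨⨅ k, θ k, le_ciInf hθnn, htend⟩, ?_, ?_⟩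
  · apply limaux x _ (div_pos hρ1 hMpos)
    intro k
    have := hkey k
    have h2 := hUnn k
    linarith
  · apply limaux u _ (div_pos hρ2 hMpos)
    intro k
    have := hkey k
    have h1 := hXnn k
    linarith
end
end

section
/- (Theorem 3.3(ii)) Let the sequences (xᵏ, yᵏ, uᵏ, θ_k) be generated by the FPSA iteration, let 0 < m ≤ f(Kxᵏ) ≤ M for all k, and let θ̄ = lim_{k→∞} θ_k. Then for every accumulation point (x̂, ŷ, û) of the sequence (xᵏ, yᵏ, uᵏ), one has ϑ(x̂, û) = θ̄; that is, ϑ is constant equal to θ̄ on the set of accumulation points. -/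
open Filter Metric Set RealInnerProductSpace
open scoped Topology Classical

noncomputable section

set_option maxHeartbeats 1000000 in
theorem stmt7 {n p : ℕ}
    (S : Set (EuclideanSpace ℝ (Fin n)))
    (g : EuclideanSpace ℝ (Fin n) → EReal)
    (h : EuclideanSpace ℝ (Fin n) → ℝ)
    (gh : EuclideanSpace ℝ (Fin n) → EuclideanSpace ℝ (Fin n))
    (f : EuclideanSpace ℝ (Fin p) → EReal)
    (K : EuclideanSpace ℝ (Fin n) →ₗ[ℝ] EuclideanSpace ℝ (Fin p))
    (L δ : ℝ)
    (hS : S.Nonempty) (hSconv : Convex ℝ S) (hScomp : IsCompact S)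
    (hgP : ERealProper g) (hgconv : ERealConvex g) (hglsc : LowerSemicontinuous g)
    (hfP : ERealProper f) (hfconv : ERealConvex f) (hflsc : LowerSemicontinuous f)
    (hL : 0 < L)
    (hhC1 : ∃ O : Set (EuclideanSpace ℝ (Fin n)), IsOpen O ∧ S ⊆ O ∧
      (∀ z ∈ O, HasGradientAt h (gh z) z) ∧
      (∀ z ∈ O, ∀ w ∈ O, ‖gh z - gh w‖ ≤ L * ‖z - w‖))
    (hKS : ∀ z ∈ S, K z ∈ interior (edom f))
    (hfpos : ∀ z ∈ S, (0 : EReal) < f (K z))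
    (hghnn : ∀ z ∈ S, (0 : EReal) ≤ g z + ((h z : ℝ) : EReal))
    (hSg : ∃ z ∈ S, g z ≠ ⊤)
    (hδ : 0 < δ) (hδL : δ < 1 / L)
    (σ : ℝ) (hσ : 0 < σ) (hσ2 : σ < 2)
    (x u : ℕ → EuclideanSpace ℝ (Fin n)) (y : ℕ → EuclideanSpace ℝ (Fin p)) (θ : ℕ → ℝ)
    (hxS : ∀ k, x k ∈ S ∧ g (x k) ≠ ⊤)
    (hy : ∀ k, y (k+1) ∈ csubdiff f (K (x k)))
    (hxmin : ∀ k, ∀ w ∈ S,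
      g (x (k+1)) + (((2*δ)⁻¹ * ‖x (k+1) - u k + δ • gh (x k)
          - (θ k * δ) • (LinearMap.adjoint K) (y (k+1))‖ ^ 2 : ℝ) : EReal)
        ≤ g w + (((2*δ)⁻¹ * ‖w - u k + δ • gh (x k)
          - (θ k * δ) • (LinearMap.adjoint K) (y (k+1))‖ ^ 2 : ℝ) : EReal))
    (hu : ∀ k, u (k+1) = (1 - σ) • u k + σ • x (k+1))
    (hθ : ∀ k, (θ k : EReal) = varthetaF S g h f K δ (x k) (u k))
    (hθnn : ∀ k, 0 ≤ θ k)
    (m M : ℝ) (hm : 0 < m)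
    (hmM : ∀ k, (m : EReal) ≤ f (K (x k)) ∧ f (K (x k)) ≤ (M : EReal))
    (θbar : ℝ) (hθlim : Tendsto θ atTop (𝓝 θbar))
    :
    ∀ (xh : EuclideanSpace ℝ (Fin n)) (yh : EuclideanSpace ℝ (Fin p))
        (uh : EuclideanSpace ℝ (Fin n)),
      (∃ φ : ℕ → ℕ, StrictMono φ ∧
          Tendsto (fun j => (x (φ j), y (φ j), u (φ j))) atTop (𝓝 (xh, yh, uh))) →
      varthetaF S g h f K δ xh uh = ((θbar : ℝ) : EReal) := by
  rintro xh yh uh ⟨φ, hφmono, hconv⟩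
  obtain ⟨O, hOopen, hSO, hgrad, hlip⟩ := hhC1
  obtain ⟨w0, hw0S, hw0T⟩ := hSg
  obtain ⟨z0, hz0S⟩ := hS
  -- component limits
  have hx : Tendsto (fun j => x (φ j)) atTop (𝓝 xh) :=
    (continuous_fst.tendsto (xh, yh, uh)).comp hconv
  have hyu : Tendsto (fun j => (y (φ j), u (φ j))) atTop (𝓝 (yh, uh)) :=
    (continuous_snd.tendsto (xh, yh, uh)).comp hconv
  have hyt : Tendsto (fun j => y (φ j)) atTop (𝓝 yh) :=
    (continuous_fst.tendsto (yh, uh)).comp hyu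
  have hut : Tendsto (fun j => u (φ j)) atTop (𝓝 uh) :=
    (continuous_snd.tendsto (yh, uh)).comp hyu
  have hxhS : xh ∈ S :=
    hScomp.isClosed.mem_of_tendsto hx (Eventually.of_forall fun j => (hxS _).1)
  -- bound on S
  obtain ⟨R, hRS⟩ := hScomp.isBounded.subset_closedBall 0
  have hxR : ∀ z ∈ S, ‖z‖ ≤ R := fun z hz => by
    simpa [mem_closedBall_zero_iff] using hRS hz
  have hR0 : 0 ≤ R := le_trans (norm_nonneg _) (hxR _ hz0S)
  -- bound on u
  have hσ1 : |1 - σ| < 1 := abs_lt.2 ⟨by linarith, by linarith⟩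
  have hσpos : 0 < 1 - |1 - σ| := by linarith
  set B : ℝ := max ‖u 0‖ (σ * R / (1 - |1 - σ|)) with hBdef
  have hB0 : 0 ≤ B := le_trans (norm_nonneg _) (le_max_left _ _)
  have hub : ∀ k, ‖u k‖ ≤ B := by
    intro k
    induction k with
    | zero => exact le_max_left _ _
    | succ k ih =>
      rw [hu k]
      have h1 : ‖(1 - σ) • u k + σ • x (k+1)‖ ≤ |1 - σ| * ‖u k‖ + σ * ‖x (k+1)‖ := by
        refine (norm_add_le _ _).trans ?_
        rw [norm_smul, norm_smul, Real.norm_eq_abs, Real.norm_eq_abs, abs_of_pos hσ]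
      have h2 : σ * R ≤ (1 - |1 - σ|) * B := by
        rw [mul_comm (1 - |1 - σ|) B, ← div_le_iff₀ hσpos]
        exact le_max_right _ _
      have h3 : ‖x (k+1)‖ ≤ R := hxR _ (hxS (k+1)).1
      nlinarith [abs_nonneg (1 - σ), norm_nonneg (u k), hσ.le]
  -- bound on gh on S
  set Cg : ℝ := ‖gh z0‖ + L * (2 * R) with hCgdef
  have hghb : ∀ z ∈ S, ‖gh z‖ ≤ Cg := by
    intro z hz
    have h1 : ‖gh z - gh z0‖ ≤ L * ‖z - z0‖ := hlip z (hSO hz) z0 (hSO hz0S)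
    have h2 : ‖z - z0‖ ≤ 2 * R := by
      have := hxR z hz; have := hxR z0 hz0S
      calc ‖z - z0‖ ≤ ‖z‖ + ‖z0‖ := norm_sub_le _ _
        _ ≤ 2 * R := by linarith
    have h3 : ‖gh z‖ - ‖gh z0‖ ≤ ‖gh z - gh z0‖ := norm_sub_norm_le _ _
    have h4 : L * ‖z - z0‖ ≤ L * (2 * R) := by
      exact mul_le_mul_of_nonneg_left h2 hL.le
    simp only [hCgdef]; linarith
  -- bound on θ
  obtain ⟨T, hT⟩ := hθlim.bddAbove_range
  have hTb : ∀ k, θ k ≤ T := fun k => hT ⟨k, rfl⟩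
  have hT0 : 0 ≤ T := le_trans (hθnn 0) (hTb 0)
  -- bound on adjoint of y along the subsequence
  set A := LinearMap.adjoint K with hAdef
  have hAcont : Continuous A := A.continuous_of_finiteDimensional
  obtain ⟨Cy, hCy⟩ := ((hAcont.tendsto yh).comp hyt).norm.bddAbove_range
  have hCyb : ∀ j, ‖A (y (φ j))‖ ≤ Cy := fun j => hCy ⟨j, rfl⟩
  have hCy0 : 0 ≤ Cy := le_trans (norm_nonneg _) (hCyb 0)
  -- the shifted centers
  set cc : ℕ → EuclideanSpace ℝ (Fin n) :=
    fun k => u k - δ • gh (x k) + (θ k * δ) • A (y (k+1)) with hccdef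
  set C : ℝ := B + δ * Cg + T * δ * Cy with hCdef
  have hccb : ∀ k, ‖A (y (k+1))‖ ≤ Cy → ‖cc k‖ ≤ C := by
    intro k hAy
    have h1 : ‖cc k‖ ≤ ‖u k - δ • gh (x k)‖ + ‖(θ k * δ) • A (y (k+1))‖ := norm_add_le _ _
    have h2 : ‖u k - δ • gh (x k)‖ ≤ ‖u k‖ + ‖δ • gh (x k)‖ := norm_sub_le _ _
    have h3 : ‖δ • gh (x k)‖ = δ * ‖gh (x k)‖ := by
      rw [norm_smul, Real.norm_eq_abs, abs_of_pos hδ]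
    have h4 : ‖(θ k * δ) • A (y (k+1))‖ = (θ k * δ) * ‖A (y (k+1))‖ := by
      rw [norm_smul, Real.norm_eq_abs, abs_of_nonneg (mul_nonneg (hθnn k) hδ.le)]
    have h5 : ‖gh (x k)‖ ≤ Cg := hghb _ (hxS k).1
    have h6 : (θ k * δ) * ‖A (y (k+1))‖ ≤ T * δ * Cy := by
      have i1 : θ k * δ ≤ T * δ := mul_le_mul_of_nonneg_right (hTb k) hδ.le
      exact mul_le_mul i1 hAy (norm_nonneg _) (by positivity)
    have h7 : ‖u k‖ ≤ B := hub k
    have h8 : δ * ‖gh (x k)‖ ≤ δ * Cg := mul_le_mul_of_nonneg_left h5 hδ.le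
    simp only [hCdef]
    linarith
  -- the key minimization inequality, in real form
  have key : ∀ k, ∀ w ∈ S, g w ≠ ⊤ →
      (g (x (k+1))).toReal + (2*δ)⁻¹ * ‖x (k+1) - cc k‖ ^ 2
        ≤ (g w).toReal + (2*δ)⁻¹ * ‖w - cc k‖ ^ 2 := by
    intro k w hw hwT
    have h1 := hxmin k w hw
    have e1 : ∀ v : EuclideanSpace ℝ (Fin n),
        v - u k + δ • gh (x k) - (θ k * δ) • A (y (k+1)) = v - cc k := by
      intro v; simp only [hccdef]; abel
    rw [e1, e1] at h1
    rw [← EReal.coe_toReal (hxS (k+1)).2 (hgP.1 _), ← EReal.coe_toReal hwT (hgP.1 _)] at h1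
    rw [← EReal.coe_add, ← EReal.coe_add] at h1
    exact_mod_cast h1
  -- g is finite at xh
  set D : ℝ := (g w0).toReal + (2*δ)⁻¹ * (R + C) ^ 2 with hDdef
  have habound : ∀ j, 1 ≤ j → (g (x (φ j))).toReal ≤ D := by
    intro j hj
    have hφj : φ j - 1 + 1 = φ j := Nat.sub_add_cancel (le_trans hj (hφmono.le_apply))
    have hAy : ‖A (y (φ j - 1 + 1))‖ ≤ Cy := by rw [hφj]; exact hCyb j
    have hcb : ‖cc (φ j - 1)‖ ≤ C := hccb _ hAy
    have h1 := key (φ j - 1) w0 hw0S hw0T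
    rw [hφj] at h1
    have h2 : ‖w0 - cc (φ j - 1)‖ ≤ R + C := by
      calc ‖w0 - cc (φ j - 1)‖ ≤ ‖w0‖ + ‖cc (φ j - 1)‖ := norm_sub_le _ _
        _ ≤ R + C := add_le_add (hxR _ hw0S) hcb
    have h3 : ‖w0 - cc (φ j - 1)‖ ^ 2 ≤ (R + C) ^ 2 := by
      have := norm_nonneg (w0 - cc (φ j - 1)); nlinarith
    have h4 : (0:ℝ) < (2*δ)⁻¹ := by positivity
    simp only [hDdef]
    nlinarith [sq_nonneg ‖x (φ j) - cc (φ j - 1)‖]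
  have hgxhT : g xh ≠ ⊤ := by
    intro hTt
    have hDlt : ((D:ℝ):EReal) < g xh := by rw [hTt]; exact EReal.coe_lt_top _
    have hev : ∀ᶠ j in atTop, ((D:ℝ):EReal) < g (x (φ j)) :=
      hx.eventually (hglsc xh _ hDlt)
    obtain ⟨j, hjD, hj1⟩ := (hev.and (eventually_ge_atTop 1)).exists
    have h1 : D < (g (x (φ j))).toReal := by
      rw [← EReal.coe_toReal (hxS (φ j)).2 (hgP.1 _)] at hjD
      exact_mod_cast hjD
    exact absurd (habound j hj1) (not_le.mpr h1)
  set gbar : ℝ := (g xh).toReal with hgbardef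
  have hgco : g xh = ((gbar:ℝ):EReal) := (EReal.coe_toReal hgxhT (hgP.1 _)).symm
  -- the error terms
  set a : ℕ → ℝ := fun j => (g (x (φ j))).toReal with hadef
  set ε : ℕ → ℝ := fun j =>
    (2*δ)⁻¹ * (‖xh - cc (φ j - 1)‖ ^ 2 - ‖x (φ j) - cc (φ j - 1)‖ ^ 2) with hεdef
  have hccbj : ∀ j, 1 ≤ j → ‖cc (φ j - 1)‖ ≤ C := by
    intro j hj
    have hφj : φ j - 1 + 1 = φ j := Nat.sub_add_cancel (le_trans hj (hφmono.le_apply))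
    exact hccb _ (by rw [hφj]; exact hCyb j)
  have hεbound : ∀ j, 1 ≤ j → |ε j| ≤ (2*δ)⁻¹ * (2*(R+C)) * ‖xh - x (φ j)‖ := by
    intro j hj
    have hcb := hccbj j hj
    set q := cc (φ j - 1)
    have hA1 : ‖xh - q‖ ≤ R + C :=
      (norm_sub_le _ _).trans (add_le_add (hxR _ hxhS) hcb)
    have hA2 : ‖x (φ j) - q‖ ≤ R + C :=
      (norm_sub_le _ _).trans (add_le_add (hxR _ (hxS _).1) hcb)
    have hAB : |‖xh - q‖ - ‖x (φ j) - q‖| ≤ ‖xh - x (φ j)‖ := by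
      have := abs_norm_sub_norm_le (xh - q) (x (φ j) - q)
      rwa [sub_sub_sub_cancel_right] at this
    have hfac : ‖xh - q‖ ^ 2 - ‖x (φ j) - q‖ ^ 2
        = (‖xh - q‖ - ‖x (φ j) - q‖) * (‖xh - q‖ + ‖x (φ j) - q‖) := by ring
    have h2δ : (0:ℝ) < (2*δ)⁻¹ := by positivity
    have habs : |‖xh - q‖ ^ 2 - ‖x (φ j) - q‖ ^ 2| ≤ ‖xh - x (φ j)‖ * (2*(R+C)) := by
      rw [hfac, abs_mul]
      have hsum : |‖xh - q‖ + ‖x (φ j) - q‖| ≤ 2*(R+C) := by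
        rw [abs_of_nonneg (by positivity)]; linarith
      exact mul_le_mul hAB hsum (abs_nonneg _) (norm_nonneg _)
    simp only [hεdef, abs_mul, abs_of_pos h2δ]
    calc (2*δ)⁻¹ * |‖xh - q‖ ^ 2 - ‖x (φ j) - q‖ ^ 2|
        ≤ (2*δ)⁻¹ * (‖xh - x (φ j)‖ * (2*(R+C))) :=
          mul_le_mul_of_nonneg_left habs h2δ.le
      _ = (2*δ)⁻¹ * (2*(R+C)) * ‖xh - x (φ j)‖ := by ring
  have hxnorm : Tendsto (fun j => ‖xh - x (φ j)‖) atTop (𝓝 0) := by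
    have h1 : Tendsto (fun j => xh - x (φ j)) atTop (𝓝 (xh - xh)) :=
      Tendsto.sub tendsto_const_nhds hx
    simpa using h1.norm
  have hεlim : Tendsto ε atTop (𝓝 0) := by
    have hq : Tendsto (fun j => (2*δ)⁻¹ * (2*(R+C)) * ‖xh - x (φ j)‖) atTop (𝓝 0) := by
      have := hxnorm.const_mul ((2*δ)⁻¹ * (2*(R+C)))
      simpa using this
    refine squeeze_zero_norm' ?_ hq
    filter_upwards [eventually_ge_atTop 1] with j hj
    exact hεbound j hj
  have haupper : ∀ j, 1 ≤ j → a j ≤ gbar + ε j := by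
    intro j hj
    have hφj : φ j - 1 + 1 = φ j := Nat.sub_add_cancel (le_trans hj (hφmono.le_apply))
    have h1 := key (φ j - 1) xh hxhS hgxhT
    rw [hφj] at h1
    have h2 : ε j = (2*δ)⁻¹ * ‖xh - cc (φ j - 1)‖ ^ 2
        - (2*δ)⁻¹ * ‖x (φ j) - cc (φ j - 1)‖ ^ 2 := by
      simp only [hεdef]; ring
    simp only [hadef, hgbardef] at *
    linarith
  -- convergence of a to gbar
  have ha : Tendsto a atTop (𝓝 gbar) := by
    refine tendsto_order.2 ⟨?_, ?_⟩
    · intro b hb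
      have hblt : ((b:ℝ):EReal) < g xh := by
        rw [hgco]; exact_mod_cast hb
      have hev : ∀ᶠ j in atTop, ((b:ℝ):EReal) < g (x (φ j)) :=
        hx.eventually (hglsc xh _ hblt)
      filter_upwards [hev] with j hjb
      rw [← EReal.coe_toReal (hxS (φ j)).2 (hgP.1 _)] at hjb
      exact_mod_cast hjb
    · intro b hb
      have hev : ∀ᶠ j in atTop, ε j < b - gbar :=
        hεlim.eventually (eventually_lt_nhds (by linarith))
      filter_upwards [hev, eventually_ge_atTop 1] with j h1 h2
      have := haupper j h2
      linarith
  -- P values and limits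
  set P : ℕ → ℝ := fun j => a j + h (x (φ j)) + (2*δ)⁻¹ * ‖x (φ j) - u (φ j)‖ ^ 2 with hPdef
  have hhcont : ContinuousAt h xh := (hgrad xh (hSO hxhS)).continuousAt
  have hP : Tendsto P atTop (𝓝 (gbar + h xh + (2*δ)⁻¹ * ‖xh - uh‖ ^ 2)) := by
    refine Tendsto.add (ha.add (hhcont.tendsto.comp hx)) ?_
    have h1 : Tendsto (fun j => ‖x (φ j) - u (φ j)‖ ^ 2) atTop (𝓝 (‖xh - uh‖ ^ 2)) :=
      ((hx.sub hut).norm).pow 2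
    simpa [mul_comm] using h1.const_mul ((2*δ)⁻¹)
  -- phiF in real form along the iterates
  have hphik : ∀ k, phiF S g h δ (x k) (u k)
      = (((g (x k)).toReal + h (x k) + (2*δ)⁻¹ * ‖x k - u k‖ ^ 2 : ℝ) : EReal) := by
    intro k
    rw [phiF, if_pos (hxS k).1, ← EReal.coe_toReal (hxS k).2 (hgP.1 _)]
    rw [add_zero, ← EReal.coe_add, ← EReal.coe_add]
    norm_cast
  -- f finite along the iterates
  have hfKne : ∀ k, f (K (x k)) ≠ ⊤ := fun k =>
    ne_top_of_le_ne_top (EReal.coe_ne_top M) (hmM k).2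
  have hfK : ∀ k, f (K (x k)) = (((f (K (x k))).toReal : ℝ) : EReal) := fun k =>
    (EReal.coe_toReal (hfKne k) (hfP.1 _)).symm
  have hFm : ∀ k, m ≤ (f (K (x k))).toReal := by
    intro k
    have := (hmM k).1
    rw [hfK k] at this
    exact_mod_cast this
  have hFM : ∀ k, (f (K (x k))).toReal ≤ M := by
    intro k
    have := (hmM k).2
    rw [hfK k] at this
    exact_mod_cast this
  -- θ k * F k = P k
  have hθP : ∀ k, (g (x k)).toReal + h (x k) + (2*δ)⁻¹ * ‖x k - u k‖ ^ 2
      = θ k * (f (K (x k))).toReal := by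
    intro k
    have h1 := hθ k
    rw [varthetaF, hphik k, hfK k, ← EReal.coe_div] at h1
    have h2 : θ k = ((g (x k)).toReal + h (x k) + (2*δ)⁻¹ * ‖x k - u k‖ ^ 2)
        / (f (K (x k))).toReal := by exact_mod_cast h1
    have hFne : (f (K (x k))).toReal ≠ 0 := by
      have := hFm k; linarith
    rw [eq_div_iff hFne] at h2
    linarith [h2]
  -- convexity of the effective domain of f and continuity of f on its interior
  have hedomc : Convex ℝ (edom f) := by
    intro z hz w hw aa bb haa hbb hab
    have h1 := hfconv z w aa bb haa hbb hab
    have hz' : f z ≠ ⊤ := hz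
    have hw' : f w ≠ ⊤ := hw
    have h2 : (aa:EReal) * f z + (bb:EReal) * f w
        = ((aa * (f z).toReal + bb * (f w).toReal : ℝ) : EReal) := by
      rw [← EReal.coe_toReal hz' (hfP.1 _), ← EReal.coe_toReal hw' (hfP.1 _)]
      rw [← EReal.coe_mul, ← EReal.coe_mul, ← EReal.coe_add]
      norm_cast
    rw [h2] at h1
    exact ne_top_of_le_ne_top (EReal.coe_ne_top _) h1
  have hDomconv : Convex ℝ (interior (edom f)) := hedomc.interior
  have hfrconv : ConvexOn ℝ (interior (edom f)) (fun z => (f z).toReal) := by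
    refine ⟨hDomconv, ?_⟩
    intro z hz w hw aa bb haa hbb hab
    have hmem : aa • z + bb • w ∈ interior (edom f) := hDomconv hz hw haa hbb hab
    have h1 := hfconv z w aa bb haa hbb hab
    have hzT : f z ≠ ⊤ := interior_subset hz
    have hwT : f w ≠ ⊤ := interior_subset hw
    have hmT : f (aa • z + bb • w) ≠ ⊤ := interior_subset hmem
    rw [← EReal.coe_toReal hzT (hfP.1 _), ← EReal.coe_toReal hwT (hfP.1 _),
      ← EReal.coe_toReal hmT (hfP.1 _), ← EReal.coe_mul, ← EReal.coe_mul,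
      ← EReal.coe_add] at h1
    exact_mod_cast h1
  have hKxh : K xh ∈ interior (edom f) := hKS xh hxhS
  have hKcont : Continuous K := K.continuous_of_finiteDimensional
  have hfc : ContinuousAt (fun z => (f z).toReal) (K xh) :=
    (hfrconv.continuousOn isOpen_interior).continuousAt (isOpen_interior.mem_nhds hKxh)
  set Fh : ℝ := (f (K xh)).toReal with hFhdef
  have hF : Tendsto (fun j => (f (K (x (φ j)))).toReal) atTop (𝓝 Fh) :=
    hfc.tendsto.comp ((hKcont.tendsto xh).comp hx)
  have hFhm : m ≤ Fh := le_of_tendsto_of_tendsto tendsto_const_nhds hF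
    (Eventually.of_forall fun j => hFm (φ j))
  have hFhne : Fh ≠ 0 := by linarith
  have hfKxh : f (K xh) = ((Fh:ℝ):EReal) :=
    (EReal.coe_toReal (interior_subset hKxh) (hfP.1 _)).symm
  -- identify the limit of P
  have hθφ : Tendsto (fun j => θ (φ j)) atTop (𝓝 θbar) := hθlim.comp hφmono.tendsto_atTop
  have hP2 : Tendsto P atTop (𝓝 (θbar * Fh)) := by
    have hPe : P = fun j => θ (φ j) * (f (K (x (φ j)))).toReal :=
      funext fun j => hθP (φ j)
    rw [hPe]
    exact hθφ.mul hF
  have hPeq : gbar + h xh + (2*δ)⁻¹ * ‖xh - uh‖ ^ 2 = θbar * Fh :=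
    tendsto_nhds_unique hP hP2
  -- conclusion
  have hphixh : phiF S g h δ xh uh
      = ((gbar + h xh + (2*δ)⁻¹ * ‖xh - uh‖ ^ 2 : ℝ) : EReal) := by
    rw [phiF, if_pos hxhS, hgco, add_zero, ← EReal.coe_add, ← EReal.coe_add]
  rw [varthetaF, hphixh, hfKxh, hPeq, ← EReal.coe_div]
  congr 1
  field_simp
end
end

section
/- (Theorem 3.5(i)) Let the sequences (xᵏ, yᵏ, uᵏ, θ_k) be generated by the FPSA iteration, and let m, M > 0 satisfy m ≤ f(Kxᵏ) ≤ M for all k. Define the merit function ϖ(x,y,u) = φ(x,u)/(⟨Kx, y⟩ − f*(y)) on the set where ⟨Kx,y⟩ − f*(y) > m/2. Then there exist c > 0 and an index K̂ such that for all k ≥ K̂, ϖ(xᵏ⁺¹, yᵏ⁺¹, uᵏ⁺¹) ≤ ϖ(xᵏ, yᵏ, uᵏ) − c‖xᵏ − xᵏ⁺¹‖² − c‖uᵏ − uᵏ⁺¹‖². -/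
open Filter Metric Set RealInnerProductSpace
open scoped Topology Classical

noncomputable section

section Helpers

variable {E : Type*} [NormedAddCommGroup E] [InnerProductSpace ℝ E]

lemma norm_combo_sq (t : ℝ) (a b v : E) :
    ‖((1-t) • a + t • b) - v‖^2
      = (1-t) * ‖a - v‖^2 + t * ‖b - v‖^2 - t*(1-t)*‖a - b‖^2 := by
  have h1 : ((1-t) • a + t • b) - v = (1-t) • (a - v) + t • (b - v) := by
    rw [smul_sub, smul_sub, sub_smul, sub_smul, one_smul, one_smul]; abel
  rw [h1]
  have e1 : ‖(1-t) • (a - v) + t • (b - v)‖^2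
      = (1-t)^2*‖a-v‖^2 + 2*(t*(1-t))*⟪a-v, b-v⟫ + t^2*‖b-v‖^2 := by
    rw [norm_add_sq_real, norm_smul, norm_smul, real_inner_smul_left, real_inner_smul_right,
      Real.norm_eq_abs, Real.norm_eq_abs, mul_pow, mul_pow, sq_abs, sq_abs]
    ring
  have e2 : ‖a - b‖^2 = ‖a-v‖^2 - 2*⟪a-v,b-v⟫ + ‖b-v‖^2 := by
    have h : a - b = (a - v) - (b - v) := by abel
    rw [h, norm_sub_sq_real]
  rw [e1, e2]; ring

lemma prox_strong {S : Set E} (hS : Convex ℝ S) {g : E → EReal}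
    (hgconv : ERealConvex g) (hgbot : ∀ z, g z ≠ ⊥) {c : ℝ} (hc : 0 < c) {v xs xk : E}
    (hxsS : xs ∈ S) (hxkS : xk ∈ S) (hgxs : g xs ≠ ⊤) (hgxk : g xk ≠ ⊤)
    (hmin : ∀ w ∈ S, g xs + ((c * ‖xs - v‖^2 : ℝ):EReal) ≤ g w + ((c * ‖w - v‖^2 : ℝ):EReal)) :
    (g xs).toReal + c*‖xs - v‖^2 + c*‖xs - xk‖^2 ≤ (g xk).toReal + c*‖xk - v‖^2 := by
  set Gs := (g xs).toReal with hGs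
  set Gk := (g xk).toReal with hGk
  have hgs : g xs = (Gs : EReal) := (EReal.coe_toReal hgxs (hgbot xs)).symm
  have hgk : g xk = (Gk : EReal) := (EReal.coe_toReal hgxk (hgbot xk)).symm
  set A := ‖xs - v‖^2 with hA
  set B := ‖xk - v‖^2 with hB
  set D := ‖xs - xk‖^2 with hD
  have key : ∀ t ∈ Set.Ioo (0:ℝ) 1, Gs + c*A + c*(1-t)*D ≤ Gk + c*B := by
    intro t ht
    have hzS : (1-t) • xs + t • xk ∈ S :=
      hS hxsS hxkS (by linarith [ht.2]) (le_of_lt ht.1) (by ring)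
    have h1 : g ((1-t) • xs + t • xk) ≤ (((1-t)*Gs + t*Gk : ℝ) : EReal) := by
      have := hgconv xs xk (1-t) t (by linarith [ht.2]) (le_of_lt ht.1) (by ring)
      rw [hgs, hgk] at this
      push_cast at this ⊢
      exact this
    have h2 := hmin _ hzS
    have h3 : (Gs : EReal) + ((c * A : ℝ) : EReal)
        ≤ (((1-t)*Gs + t*Gk : ℝ) : EReal) + ((c * ‖((1-t) • xs + t • xk) - v‖^2 : ℝ) : EReal) := by
      rw [← hgs]
      exact h2.trans (add_le_add_left h1 _)
    rw [← EReal.coe_add, ← EReal.coe_add, EReal.coe_le_coe_iff, norm_combo_sq] at h3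
    have ht' := ht.1
    have h4 : t * (Gs + c*A + c*(1-t)*D) ≤ t * (Gk + c*B) := by
      simp only [hA, hB, hD]
      nlinarith [h3]
    exact (mul_le_mul_iff_right₀ ht').mp h4
  have htend : Tendsto (fun t : ℝ => Gs + c*A + c*(1-t)*D) (𝓝[>] (0:ℝ))
      (𝓝 (Gs + c*A + c*D)) := by
    have h5 : Tendsto (fun t : ℝ => Gs + c*A + c*(1-t)*D) (𝓝 (0:ℝ))
        (𝓝 (Gs + c*A + c*(1-0)*D)) := by
      apply Continuous.tendsto
      fun_prop
    simpa using h5.mono_left nhdsWithin_le_nhds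
  refine le_of_tendsto htend ?_
  filter_upwards [Ioo_mem_nhdsGT_of_mem (by norm_num : (0:ℝ) ∈ Set.Ico (0:ℝ) 1)] with t ht
  exact key t ht

lemma descent_lemma [CompleteSpace E] {h : E → ℝ} {gh : E → E} {O : Set E}
    {L : ℝ} (hL : 0 < L)
    (hgrad : ∀ z ∈ O, HasGradientAt h (gh z) z)
    (hlip : ∀ z ∈ O, ∀ w ∈ O, ‖gh z - gh w‖ ≤ L * ‖z - w‖)
    {a b : E} (hseg : segment ℝ a b ⊆ O) :
    h b ≤ h a + ⟪gh a, b - a⟫ + L/2 * ‖b - a‖^2 := by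
  set γ : ℝ → E := fun t => a + t • (b - a) with hγ
  have hγmem : ∀ t ∈ Set.Icc (0:ℝ) 1, γ t ∈ O := by
    intro t ht
    apply hseg
    rw [segment_eq_image']
    exact ⟨t, ht, rfl⟩
  have hγcont : Continuous γ := by fun_prop
  set ψ' : ℝ → ℝ := fun t => ⟪gh (γ t), b - a⟫ with hψ'
  have hderiv : ∀ t ∈ Set.Icc (0:ℝ) 1, HasDerivAt (fun s => h (γ s)) (ψ' t) t := by
    intro t ht
    have h1 : HasDerivAt γ (b - a) t := by
      have h0 : HasDerivAt (fun s : ℝ => s • (b - a)) ((1:ℝ) • (b - a)) t :=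
        (hasDerivAt_id t).smul_const (b - a)
      have h0' := h0.const_add a; rw [one_smul] at h0'; exact h0'
    have h2 : HasGradientAt h (gh (γ t)) (γ t) := hgrad _ (hγmem t ht)
    have h3 : HasFDerivAt h ((InnerProductSpace.toDual ℝ E) (gh (γ t))) (γ t) := h2
    have := h3.comp_hasDerivAt t h1
    exact this
  have hcontψ' : ContinuousOn ψ' (Set.Icc 0 1) := by
    apply ContinuousOn.inner ?_ continuousOn_const
    have hlipO : LipschitzOnWith (Real.toNNReal L) gh O := by
      apply LipschitzOnWith.of_dist_le_mul
      intro z hz w hw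
      rw [dist_eq_norm, dist_eq_norm]
      calc ‖gh z - gh w‖ ≤ L * ‖z - w‖ := hlip z hz w hw
        _ = (Real.toNNReal L) * ‖z - w‖ := by rw [Real.coe_toNNReal _ hL.le]
    exact (hlipO.continuousOn.comp hγcont.continuousOn hγmem)
  have hcontu : ContinuousOn ψ' (Set.uIcc (0:ℝ) 1) := by
    rw [Set.uIcc_of_le (by norm_num : (0:ℝ) ≤ 1)]; exact hcontψ'
  have hFTC : ∫ t in (0:ℝ)..1, ψ' t = h (γ 1) - h (γ 0) := by
    apply intervalIntegral.integral_eq_sub_of_hasDerivAt (f := fun s => h (γ s))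
    · intro t ht
      rw [Set.uIcc_of_le (by norm_num : (0:ℝ) ≤ 1)] at ht
      exact hderiv t ht
    · exact hcontu.intervalIntegrable
  have hbound : ∀ t ∈ Set.Icc (0:ℝ) 1, ψ' t ≤ ψ' 0 + L * ‖b - a‖^2 * t := by
    intro t ht
    have hsub : ψ' t - ψ' 0 = ⟪gh (γ t) - gh (γ 0), b - a⟫ := by
      rw [hψ', inner_sub_left]
    have h1 : ψ' t - ψ' 0 ≤ ‖gh (γ t) - gh (γ 0)‖ * ‖b - a‖ := by
      rw [hsub]; exact real_inner_le_norm _ _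
    have h2 : ‖gh (γ t) - gh (γ 0)‖ ≤ L * (t * ‖b - a‖) := by
      have h5 := hlip _ (hγmem t ht) _ (hγmem 0 (by norm_num))
      have hγd : γ t - γ 0 = t • (b - a) := by simp [hγ]
      calc ‖gh (γ t) - gh (γ 0)‖ ≤ L * ‖γ t - γ 0‖ := h5
        _ = L * (t * ‖b - a‖) := by
            rw [hγd, norm_smul, Real.norm_eq_abs, abs_of_nonneg ht.1]
    nlinarith [norm_nonneg (b - a), h1, h2, mul_le_mul_of_nonneg_right h2 (norm_nonneg (b - a))]
  have hint : ∫ t in (0:ℝ)..1, ψ' t ≤ ∫ t in (0:ℝ)..1, (ψ' 0 + L * ‖b - a‖^2 * t) := by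
    apply intervalIntegral.integral_mono_on (by norm_num)
    · exact hcontu.intervalIntegrable
    · apply IntervalIntegrable.add intervalIntegrable_const
      exact ((by fun_prop : Continuous fun t : ℝ => L * ‖b - a‖^2 * t).intervalIntegrable 0 1)
    · exact hbound
  have hval : ∫ t in (0:ℝ)..1, (ψ' 0 + L * ‖b - a‖^2 * t) = ψ' 0 + L * ‖b - a‖^2 / 2 := by
    rw [intervalIntegral.integral_add intervalIntegrable_const
      ((by fun_prop : Continuous fun t : ℝ => L * ‖b - a‖^2 * t).intervalIntegrable 0 1),
      intervalIntegral.integral_const, intervalIntegral.integral_const_mul,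
      integral_id]
    norm_num
    ring
  have hγ0 : γ 0 = a := by simp [hγ]
  have hγ1 : γ 1 = b := by simp [hγ]
  have hψ'0 : ψ' 0 = ⟪gh a, b - a⟫ := by
    show ⟪gh (γ 0), b - a⟫ = ⟪gh a, b - a⟫
    rw [hγ0]
  rw [hγ0, hγ1] at hFTC
  nlinarith [hFTC, hint, hval, hψ'0]

lemma econj_eq_of_subdiff {f : E → EReal} (hbot : ∀ z, f z ≠ ⊥) {z0 y : E} {F0 : ℝ}
    (hz : f z0 = (F0 : EReal)) (hy : y ∈ csubdiff f z0) :
    econj f y = ((⟪z0, y⟫ - F0 : ℝ) : EReal) := by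
  apply le_antisymm
  · apply iSup_le
    intro z
    by_cases hfz : f z = ⊤
    · rw [hfz]
      rw [EReal.sub_top]
      exact bot_le
    · have hfz' : f z = ((f z).toReal : EReal) := (EReal.coe_toReal hfz (hbot z)).symm
      set Fz := (f z).toReal
      have h1 := hy z
      rw [hz, hfz', ← EReal.coe_add, EReal.coe_le_coe_iff] at h1
      rw [hfz', ← EReal.coe_sub, EReal.coe_le_coe_iff]
      have hinn : ⟪y, z - z0⟫ = ⟪z, y⟫ - ⟪z0, y⟫ := by
        rw [inner_sub_right, real_inner_comm y z, real_inner_comm y z0]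
      linarith [h1, hinn.ge, hinn.le]
  · have := le_iSup (fun z => (((⟪z, y⟫ : ℝ) : EReal) - f z)) z0
    rw [hz, ← EReal.coe_sub] at this
    exact this

lemma subgrad_norm_bound {f : E → EReal} (hbot : ∀ z, f z ≠ ⊥) {x0 : E} {r C mlow : ℝ}
    (hr : 0 < r) (hC : ∀ z, dist z x0 ≤ r → f z ≤ (C : EReal))
    (hm : (mlow : EReal) ≤ f x0) {y : E} (hy : y ∈ csubdiff f x0) :
    ‖y‖ ≤ (C - mlow) / r := by
  have hmC : mlow ≤ C := by
    have h0 := hC x0 (by simp [hr.le])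
    have := hm.trans h0
    exact_mod_cast this
  rcases eq_or_ne y 0 with rfl | hy0
  · simp only [norm_zero]
    exact div_nonneg (by linarith) hr.le
  · set e : E := ‖y‖⁻¹ • y with he
    have hne : ‖e‖ = 1 := by
      rw [he, norm_smul, norm_inv, norm_norm, inv_mul_cancel₀ (norm_ne_zero_iff.mpr hy0)]
    set z : E := x0 + r • e with hzdef
    have hdist : dist z x0 ≤ r := by
      rw [hzdef, dist_eq_norm, add_sub_cancel_left, norm_smul, hne, Real.norm_eq_abs,
        abs_of_nonneg hr.le, mul_one]
    have h1 := hy z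
    have hzz : z - x0 = r • e := by rw [hzdef]; abel
    have hinn : ⟪y, z - x0⟫ = r * ‖y‖ := by
      rw [hzz, real_inner_smul_right, he, real_inner_smul_right,
        real_inner_self_eq_norm_sq]
      rw [pow_two]
      field_simp
    have h2 : (mlow : EReal) + ((r * ‖y‖ : ℝ) : EReal) ≤ (C : EReal) := by
      calc (mlow : EReal) + ((r * ‖y‖ : ℝ) : EReal)
          ≤ f x0 + ((⟪y, z - x0⟫ : ℝ) : EReal) := by rw [hinn]; exact add_le_add_left hm _
        _ ≤ f z := h1
        _ ≤ (C : EReal) := hC z hdist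
    rw [← EReal.coe_add, EReal.coe_le_coe_iff] at h2
    rw [le_div_iff₀ hr]
    nlinarith

lemma exists_unif_upper_bound [FiniteDimensional ℝ E]
    {f : E → EReal} (hbot : ∀ z, f z ≠ ⊥) (hconv : ERealConvex f)
    {A : Set E} (hA : IsCompact A) (hAne : A.Nonempty) (hAsub : A ⊆ interior (edom f)) :
    ∃ r > (0:ℝ), ∃ C : ℝ, ∀ a ∈ A, ∀ z, dist z a ≤ r → f z ≤ (C : EReal) := by
  have hcoe : ∀ z ∈ edom f, f z = (((f z).toReal : ℝ) : EReal) :=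
    fun z hz => (EReal.coe_toReal hz (hbot z)).symm
  have hDconv : Convex ℝ (edom f) := by
    intro x hx y hy a b ha hb hab
    have h1 := hconv x y a b ha hb hab
    rw [hcoe x hx, hcoe y hy, ← EReal.coe_mul, ← EReal.coe_mul, ← EReal.coe_add] at h1
    intro htop
    rw [htop] at h1
    exact (EReal.coe_lt_top _).not_ge h1
  have hIconv : Convex ℝ (interior (edom f)) := hDconv.interior
  set fr : E → ℝ := fun z => (f z).toReal with hfr
  have hfrconv : ConvexOn ℝ (interior (edom f)) fr := by
    refine ⟨hIconv, ?_⟩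
    intro x hx y hy a b ha hb hab
    have hxy : a • x + b • y ∈ interior (edom f) := hIconv hx hy ha hb hab
    have h1 := hconv x y a b ha hb hab
    rw [hcoe x (interior_subset hx), hcoe y (interior_subset hy),
      ← EReal.coe_mul, ← EReal.coe_mul, ← EReal.coe_add] at h1
    have := EReal.toReal_le_toReal h1 (hbot _) (EReal.coe_ne_top _)
    rw [EReal.toReal_coe] at this; exact this
  have hcont : ContinuousOn fr (interior (edom f)) :=
    hfrconv.continuousOn isOpen_interior
  obtain ⟨r, hr, hsub⟩ := hA.exists_cthickening_subset_open isOpen_interior hAsub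
  have hT : IsCompact (Metric.cthickening r A) := hA.cthickening
  have hTne : (Metric.cthickening r A).Nonempty := hAne.mono (Metric.self_subset_cthickening A)
  obtain ⟨z0, hz0, hmax⟩ := hT.exists_isMaxOn hTne (hcont.mono hsub)
  refine ⟨r, hr, fr z0, ?_⟩
  intro a ha z hz
  have hzT : z ∈ Metric.cthickening r A := Metric.mem_cthickening_of_dist_le z a r A ha hz
  have hfz : f z = ((fr z : ℝ) : EReal) := hcoe z (interior_subset (hsub hzT))
  rw [hfz]
  exact_mod_cast hmax hzT

end Helpers


set_option maxHeartbeats 2000000 in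
theorem stmt11 {n p : ℕ}
    (S : Set (EuclideanSpace ℝ (Fin n)))
    (g : EuclideanSpace ℝ (Fin n) → EReal)
    (h : EuclideanSpace ℝ (Fin n) → ℝ)
    (gh : EuclideanSpace ℝ (Fin n) → EuclideanSpace ℝ (Fin n))
    (f : EuclideanSpace ℝ (Fin p) → EReal)
    (K : EuclideanSpace ℝ (Fin n) →ₗ[ℝ] EuclideanSpace ℝ (Fin p))
    (L δ : ℝ)
    (hS : S.Nonempty) (hSconv : Convex ℝ S) (hScomp : IsCompact S)
    (hgP : ERealProper g) (hgconv : ERealConvex g) (hglsc : LowerSemicontinuous g)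
    (hfP : ERealProper f) (hfconv : ERealConvex f) (hflsc : LowerSemicontinuous f)
    (hL : 0 < L)
    (hhC1 : ∃ O : Set (EuclideanSpace ℝ (Fin n)), IsOpen O ∧ S ⊆ O ∧
      (∀ z ∈ O, HasGradientAt h (gh z) z) ∧
      (∀ z ∈ O, ∀ w ∈ O, ‖gh z - gh w‖ ≤ L * ‖z - w‖))
    (hKS : ∀ z ∈ S, K z ∈ interior (edom f))
    (hfpos : ∀ z ∈ S, (0 : EReal) < f (K z))
    (hghnn : ∀ z ∈ S, (0 : EReal) ≤ g z + ((h z : ℝ) : EReal))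
    (hSg : ∃ z ∈ S, g z ≠ ⊤)
    (hδ : 0 < δ) (hδL : δ < 1 / L)
    (σ : ℝ) (hσ : 0 < σ) (hσ2 : σ < 2)
    (x u : ℕ → EuclideanSpace ℝ (Fin n)) (y : ℕ → EuclideanSpace ℝ (Fin p)) (θ : ℕ → ℝ)
    (hxS : ∀ k, x k ∈ S ∧ g (x k) ≠ ⊤)
    (hy : ∀ k, y (k+1) ∈ csubdiff f (K (x k)))
    (hxmin : ∀ k, ∀ w ∈ S,
      g (x (k+1)) + (((2*δ)⁻¹ * ‖x (k+1) - u k + δ • gh (x k)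
          - (θ k * δ) • (LinearMap.adjoint K) (y (k+1))‖ ^ 2 : ℝ) : EReal)
        ≤ g w + (((2*δ)⁻¹ * ‖w - u k + δ • gh (x k)
          - (θ k * δ) • (LinearMap.adjoint K) (y (k+1))‖ ^ 2 : ℝ) : EReal))
    (hu : ∀ k, u (k+1) = (1 - σ) • u k + σ • x (k+1))
    (hθ : ∀ k, (θ k : EReal) = varthetaF S g h f K δ (x k) (u k))
    (hθnn : ∀ k, 0 ≤ θ k)
    (m M : ℝ) (hm : 0 < m)
    (hmM : ∀ k, (m : EReal) ≤ f (K (x k)) ∧ f (K (x k)) ≤ (M : EReal))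
    :
    ∃ c > (0:ℝ), ∃ N : ℕ, ∀ k ≥ N,
      varpiF S g h f K δ (x (k+1)) (y (k+1)) (u (k+1))
      ≤ varpiF S g h f K δ (x k) (y k) (u k)
        - ((c * ‖x k - x (k+1)‖ ^ 2 : ℝ) : EReal)
        - ((c * ‖u k - u (k+1)‖ ^ 2 : ℝ) : EReal) := by
  classical
  obtain ⟨O, hOopen, hSO, hgrad, hlip⟩ := hhC1
  -- real values of g and f along the iterates
  set G : ℕ → ℝ := fun k => (g (x k)).toReal with hGdef
  have hgco : ∀ k, g (x k) = ((G k : ℝ) : EReal) :=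
    fun k => (EReal.coe_toReal (hxS k).2 (hgP.1 _)).symm
  have hfne : ∀ k, f (K (x k)) ≠ ⊤ :=
    fun k => ne_top_of_le_ne_top (EReal.coe_ne_top M) (hmM k).2
  set F : ℕ → ℝ := fun k => (f (K (x k))).toReal with hFdef
  have hFco : ∀ k, f (K (x k)) = ((F k : ℝ) : EReal) :=
    fun k => (EReal.coe_toReal (hfne k) (hfP.1 _)).symm
  have hFm : ∀ k, m ≤ F k := by
    intro k
    have h1 := (hmM k).1
    rw [hFco k] at h1
    exact_mod_cast h1
  have hFM : ∀ k, F k ≤ M := by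
    intro k
    have h1 := (hmM k).2
    rw [hFco k] at h1
    exact_mod_cast h1
  have hFpos : ∀ k, 0 < F k := fun k => lt_of_lt_of_le hm (hFm k)
  have hMpos : 0 < M := lt_of_lt_of_le (hFpos 0) (hFM 0)
  set P : ℕ → ℝ := fun k => G k + h (x k) + (2*δ)⁻¹ * ‖x k - u k‖^2 with hPdef
  have hphi : ∀ k, phiF S g h δ (x k) (u k) = ((P k : ℝ) : EReal) := by
    intro k
    simp only [phiF, hPdef]
    rw [if_pos (hxS k).1, hgco k, add_zero, ← EReal.coe_add, ← EReal.coe_add]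
  have hPnn : ∀ k, 0 ≤ P k := by
    intro k
    have h1 := hghnn (x k) (hxS k).1
    rw [hgco k] at h1
    have h2 : (0:EReal) ≤ ((G k + h (x k) : ℝ) : EReal) := by
      rw [EReal.coe_add]; exact h1
    have h3 : (0:ℝ) ≤ G k + h (x k) := by exact_mod_cast h2
    have h4 : (0:ℝ) ≤ (2*δ)⁻¹ * ‖x k - u k‖^2 := by positivity
    simp only [hPdef]; linarith
  have hθval : ∀ k, θ k = P k / F k := by
    intro k
    have h1 := hθ k
    simp only [varthetaF] at h1
    rw [hphi k, hFco k, ← EReal.coe_div] at h1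
    exact_mod_cast h1
  have hθF : ∀ k, θ k * F k = P k := by
    intro k
    rw [hθval k, div_mul_cancel₀ _ (ne_of_gt (hFpos k))]
  -- constants
  have h2δ : (0:ℝ) < 2*δ := by linarith
  have hδL' : δ * L < 1 := by
    have := (lt_div_iff₀ hL).mp hδL
    linarith
  have hinv2δ : (2*δ)⁻¹ * (2*δ) = 1 := inv_mul_cancel₀ (ne_of_gt h2δ)
  set α : ℝ := (2*δ)⁻¹ - L/2 with hαdef
  have hα : 0 < α := by
    simp only [hαdef]
    nlinarith [hinv2δ, hδ, hL, hδL']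
  set β : ℝ := (2*δ)⁻¹ * (2-σ) / σ with hβdef
  have hβ : 0 < β := by
    simp only [hβdef]
    have : (0:ℝ) < (2*δ)⁻¹ := by positivity
    have h2σ : (0:ℝ) < 2 - σ := by linarith
    positivity
  -- inner products along the iterates
  set inn : ℕ → ℝ := fun k => ⟪y (k+1), K (x (k+1)) - K (x k)⟫ with hinndef
  -- the key one-step inequality
  have key : ∀ k, P (k+1) + α * ‖x k - x (k+1)‖^2 + β * ‖u k - u (k+1)‖^2
      ≤ P k + θ k * inn k := by
    intro k
    set w₂ : EuclideanSpace ℝ (Fin n) :=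
      δ • gh (x k) - (θ k * δ) • (LinearMap.adjoint K) (y (k+1)) with hw₂def
    set v : EuclideanSpace ℝ (Fin n) := u k - w₂ with hvdef
    have hveq : ∀ z : EuclideanSpace ℝ (Fin n),
        z - u k + δ • gh (x k) - (θ k * δ) • (LinearMap.adjoint K) (y (k+1)) = z - v := by
      intro z
      simp only [hvdef, hw₂def]
      abel
    have hmin' : ∀ w ∈ S, g (x (k+1)) + (((2*δ)⁻¹ * ‖x (k+1) - v‖^2 : ℝ) : EReal)
        ≤ g w + (((2*δ)⁻¹ * ‖w - v‖^2 : ℝ) : EReal) := by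
      intro w hw
      have h1 := hxmin k w hw
      rw [hveq (x (k+1)), hveq w] at h1
      exact h1
    have hc0 : (0:ℝ) < (2*δ)⁻¹ := by positivity
    have hprox := prox_strong hSconv hgconv hgP.1 hc0 (hxS (k+1)).1 (hxS k).1
      (hxS (k+1)).2 (hxS k).2 hmin'
    -- expand the squared norms
    have hexp : ∀ z : EuclideanSpace ℝ (Fin n),
        ‖z - v‖^2 = ‖z - u k‖^2 + 2*⟪z - u k, w₂⟫ + ‖w₂‖^2 := by
      intro z
      have hz : z - v = (z - u k) + w₂ := by
        simp only [hvdef]; abel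
      rw [hz, norm_add_sq_real]
    rw [hexp (x (k+1)), hexp (x k)] at hprox
    -- inner-product identities
    set d : EuclideanSpace ℝ (Fin n) := x (k+1) - x k with hddef
    have hIsub : ⟪x (k+1) - u k, w₂⟫ - ⟪x k - u k, w₂⟫ = ⟪d, w₂⟫ := by
      rw [← inner_sub_left]
      congr 1
      simp only [hddef]
      abel
    have hadj : ⟪d, (LinearMap.adjoint K) (y (k+1))⟫ = inn k := by
      rw [real_inner_comm, LinearMap.adjoint_inner_left, hinndef, hddef, map_sub]
    have hdw : ⟪d, w₂⟫ = δ * ⟪gh (x k), d⟫ - (θ k * δ) * inn k := by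
      rw [hw₂def, inner_sub_right, real_inner_smul_right, real_inner_smul_right, hadj,
        real_inner_comm]
    have hdmul : 2 * (2*δ)⁻¹ * ⟪d, w₂⟫ = ⟪gh (x k), d⟫ - θ k * inn k := by
      rw [hdw]
      field_simp
    -- descent lemma
    have hseg : segment ℝ (x k) (x (k+1)) ⊆ O :=
      (hSconv.segment_subset (hxS k).1 (hxS (k+1)).1).trans hSO
    have hdes : h (x (k+1)) ≤ h (x k) + ⟪gh (x k), d⟫ + L/2 * ‖d‖^2 := by
      have := descent_lemma hL hgrad hlip hseg
      simpa [hddef] using this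
    -- u-update identities
    have he1 : x (k+1) - u (k+1) = (1-σ) • (x (k+1) - u k) := by
      rw [hu k]; module
    have he2 : u k - u (k+1) = σ • (u k - x (k+1)) := by
      rw [hu k]; module
    have hn1 : ‖x (k+1) - u (k+1)‖^2 = (1-σ)^2 * ‖x (k+1) - u k‖^2 := by
      rw [he1, norm_smul, Real.norm_eq_abs, mul_pow, sq_abs]
    have hn2 : ‖u k - u (k+1)‖^2 = σ^2 * ‖x (k+1) - u k‖^2 := by
      rw [he2, norm_smul, Real.norm_eq_abs, mul_pow, sq_abs, norm_sub_rev]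
    have hβU : β * ‖u k - u (k+1)‖^2 = (2*δ)⁻¹ * (σ*(2-σ)) * ‖x (k+1) - u k‖^2 := by
      rw [hn2, hβdef]
      field_simp
    have hX : ‖x (k+1) - x k‖ = ‖x k - x (k+1)‖ := norm_sub_rev _ _
    have hXd : ‖d‖ = ‖x k - x (k+1)‖ := by rw [hddef, hX]
    -- combine everything
    have hproxX : ‖x (k+1) - x k‖^2 = ‖x k - x (k+1)‖^2 := by rw [hX]
    rw [hproxX] at hprox
    have hd2 : ‖d‖^2 = ‖x k - x (k+1)‖^2 := by rw [hXd]
    rw [hd2] at hdes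
    have hGrfl0 : (g (x k)).toReal = G k := rfl
    have hGrfl1 : (g (x (k+1))).toReal = G (k+1) := rfl
    have hαX : α * ‖x k - x (k+1)‖^2
        = (2*δ)⁻¹ * ‖x k - x (k+1)‖^2 - L/2 * ‖x k - x (k+1)‖^2 := by
      rw [hαdef]; ring
    have h2c0 : 2*(2*δ)⁻¹*⟪x (k+1) - u k, w₂⟫ - 2*(2*δ)⁻¹*⟪x k - u k, w₂⟫
        = ⟪gh (x k), d⟫ - θ k * inn k := by
      have h9 : 2*(2*δ)⁻¹*⟪x (k+1) - u k, w₂⟫ - 2*(2*δ)⁻¹*⟪x k - u k, w₂⟫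
          = 2*(2*δ)⁻¹*(⟪x (k+1) - u k, w₂⟫ - ⟪x k - u k, w₂⟫) := by ring
      rw [h9, hIsub]
      exact hdmul
    simp only [hPdef]
    rw [hn1]
    linarith [hprox, hdes, h2c0, hβU, hαX, hGrfl0, hGrfl1]
  -- upper bound on the dual pairing
  have hνup : ∀ k, F k + inn k ≤ F (k+1) := by
    intro k
    have h1 := hy k (K (x (k+1)))
    rw [hFco k, hFco (k+1), ← EReal.coe_add, EReal.coe_le_coe_iff] at h1
    exact h1
  -- decrease of θ
  set s : ℕ → ℝ := fun k => α * ‖x k - x (k+1)‖^2 + β * ‖u k - u (k+1)‖^2 with hsdef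
  have hsnn : ∀ k, 0 ≤ s k := by
    intro k; simp only [hsdef]; positivity
  have hθdesc : ∀ k, θ (k+1) ≤ θ k - s k / M := by
    intro k
    have h1 : P (k+1) ≤ θ k * (F k + inn k) - s k := by
      have := key k
      have h2 : θ k * F k = P k := hθF k
      simp only [hsdef]
      nlinarith [this, h2]
    have h2 : θ k * (F k + inn k) ≤ θ k * F (k+1) :=
      mul_le_mul_of_nonneg_left (hνup k) (hθnn k)
    have h3 : P (k+1) ≤ θ k * F (k+1) - s k := by linarith
    have h4 : θ (k+1) ≤ θ k - s k / F (k+1) := by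
      rw [hθval (k+1)]
      rw [div_le_iff₀ (hFpos (k+1))]
      have h5 : (θ k - s k / F (k+1)) * F (k+1) = θ k * F (k+1) - s k := by
        rw [sub_mul, div_mul_cancel₀ _ (ne_of_gt (hFpos (k+1)))]
      rw [h5]
      exact h3
    have h6 : s k / M ≤ s k / F (k+1) :=
      div_le_div_of_nonneg_left (hsnn k) (hFpos (k+1)) (hFM (k+1))
    linarith
  have hθanti : Antitone θ := antitone_nat_of_succ_le (fun k => by
    have h1 := hθdesc k
    have h2 : 0 ≤ s k / M := div_nonneg (hsnn k) hMpos.le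
    linarith)
  have hθbdd : BddBelow (Set.range θ) := ⟨0, by rintro _ ⟨k, rfl⟩; exact hθnn k⟩
  have hθtend : Tendsto θ atTop (𝓝 (⨅ i, θ i)) := tendsto_atTop_ciInf hθanti hθbdd
  have hθtend' : Tendsto (fun k => θ (k+1)) atTop (𝓝 (⨅ i, θ i)) :=
    hθtend.comp (tendsto_add_atTop_nat 1)
  have hdiff : Tendsto (fun k => θ k - θ (k+1)) atTop (𝓝 0) := by
    have := hθtend.sub hθtend'
    simpa using this
  have hstend : Tendsto s atTop (𝓝 0) := by
    apply squeeze_zero hsnn (fun k => ?_) (by simpa using hdiff.const_mul M)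
    have h1 := hθdesc k
    have h2 : s k / M ≤ θ k - θ (k+1) := by linarith
    calc s k = M * (s k / M) := (by rw [mul_comm, div_mul_cancel₀ _ (ne_of_gt hMpos)])
      _ ≤ M * (θ k - θ (k+1)) := mul_le_mul_of_nonneg_left h2 hMpos.le
  -- uniform bound on the subgradients y
  have hKcont : Continuous K := K.continuous_of_finiteDimensional
  have hKSsub : K '' S ⊆ interior (edom f) := by
    rintro _ ⟨z, hz, rfl⟩; exact hKS z hz
  obtain ⟨r, hr, C, hC⟩ := exists_unif_upper_bound hfP.1 hfconv
    (hScomp.image hKcont) (hS.image K) hKSsub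
  set Y : ℝ := (C - m) / r with hYdef
  have hyb : ∀ k, ‖y (k+1)‖ ≤ Y :=
    fun k => subgrad_norm_bound hfP.1 hr
      (fun z hz => hC (K (x k)) (Set.mem_image_of_mem K (hxS k).1) z hz) (hmM k).1 (hy k)
  have hYnn : 0 ≤ Y := le_trans (norm_nonneg _) (hyb 0)
  set KC : EuclideanSpace ℝ (Fin n) →L[ℝ] EuclideanSpace ℝ (Fin p) :=
    LinearMap.toContinuousLinearMap K with hKCdef
  have hinnb : ∀ k, |inn k| ≤ Y * ‖KC‖ * ‖x k - x (k+1)‖ := by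
    intro k
    have h1 : |inn k| ≤ ‖y (k+1)‖ * ‖K (x (k+1)) - K (x k)‖ := abs_real_inner_le_norm _ _
    have h2 : ‖K (x (k+1)) - K (x k)‖ ≤ ‖KC‖ * ‖x k - x (k+1)‖ := by
      have h3 : K (x (k+1)) - K (x k) = KC (x (k+1) - x k) := by
        simp [hKCdef]
      rw [h3, norm_sub_rev (x k) (x (k+1))]
      exact KC.le_opNorm _
    calc |inn k| ≤ ‖y (k+1)‖ * ‖K (x (k+1)) - K (x k)‖ := h1
      _ ≤ Y * (‖KC‖ * ‖x k - x (k+1)‖) :=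
          mul_le_mul (hyb k) h2 (norm_nonneg _) hYnn
      _ = Y * ‖KC‖ * ‖x k - x (k+1)‖ := by ring
  -- eventually the steps are small
  set ε0 : ℝ := m / (2 * (Y * ‖KC‖ + 1)) with hε0def
  have hYK : 0 ≤ Y * ‖KC‖ := mul_nonneg hYnn (norm_nonneg _)
  have hε0 : 0 < ε0 := by
    simp only [hε0def]
    positivity
  have hsmall : ∀ᶠ k in atTop, ‖x k - x (k+1)‖ ≤ ε0 := by
    have h1 : ∀ᶠ k in atTop, s k < α * ε0^2 := by
      have := hstend.eventually (eventually_lt_nhds (by positivity : (0:ℝ) < α * ε0^2))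
      exact this
    filter_upwards [h1] with k hk
    have h2 : α * ‖x k - x (k+1)‖^2 ≤ s k := by
      simp only [hsdef]
      nlinarith [sq_nonneg ‖u k - u (k+1)‖, hβ.le, norm_nonneg (u k - u (k+1))]
    have h3 : ‖x k - x (k+1)‖^2 < ε0^2 := by
      nlinarith [hα]
    nlinarith [norm_nonneg (x k - x (k+1)), hε0]
  obtain ⟨N₀, hN₀⟩ := eventually_atTop.mp hsmall
  -- lower bound for the dual values
  have hνlow : ∀ k ≥ N₀, m/2 ≤ F k + inn k := by
    intro k hk
    have h1 := hinnb k
    have h2 := hN₀ k hk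
    have h3 : |inn k| ≤ Y * ‖KC‖ * ε0 :=
      h1.trans (mul_le_mul_of_nonneg_left h2 hYK)
    have h4 : Y * ‖KC‖ * ε0 ≤ m/2 := by
      simp only [hε0def]
      rw [← mul_div_assoc]
      have h5 : Y * ‖KC‖ * m ≤ (Y * ‖KC‖ + 1) * m := by nlinarith
      have h6 : (0:ℝ) < 2 * (Y * ‖KC‖ + 1) := by positivity
      rw [div_le_div_iff₀ h6 (by norm_num : (0:ℝ) < 2)] at *
      nlinarith [hm]
    have h5 : -(m/2) ≤ inn k := by
      have := abs_le.mp (h3.trans h4)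
      linarith [this.1]
    linarith [hFm k]
  -- formula for the denominator of ϖ
  have hden : ∀ j, (((⟪K (x (j+1)), y (j+1)⟫ : ℝ) : EReal) - econj f (y (j+1)))
      = ((F j + inn j : ℝ) : EReal) := by
    intro j
    rw [econj_eq_of_subdiff hfP.1 (hFco j) (hy j), ← EReal.coe_sub]
    congr 1
    have h1 : inn j = ⟪K (x (j+1)), y (j+1)⟫ - ⟪K (x j), y (j+1)⟫ := by
      simp only [hinndef]
      rw [real_inner_comm (K (x (j+1)) - K (x j)) (y (j+1)), inner_sub_left]
    rw [h1]
    ring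
  have hvarpi : ∀ j, varpiF S g h f K δ (x (j+1)) (y (j+1)) (u (j+1))
      = ((P (j+1) / (F j + inn j) : ℝ) : EReal) := by
    intro j
    simp only [varpiF]
    rw [hphi (j+1), hden j, ← EReal.coe_div]
  -- conclusion
  set c : ℝ := min α β / M with hcdef
  have hc : 0 < c := by
    simp only [hcdef]
    exact div_pos (lt_min hα hβ) hMpos
  refine ⟨c, hc, N₀ + 1, ?_⟩
  intro k hk
  obtain ⟨j, rfl⟩ := Nat.exists_eq_add_of_le hk
  have hidx : N₀ + 1 + j = (N₀ + j) + 1 := by omega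
  rw [hidx]
  set a := N₀ + j with hadef
  -- rewrite both sides
  rw [hvarpi (a+1), hvarpi a, ← EReal.coe_sub, ← EReal.coe_sub, EReal.coe_le_coe_iff]
  -- the real inequality
  have hn1pos : 0 < F a + inn a := lt_of_lt_of_le (by linarith [hm]) (hνlow a (by omega))
  have hn2pos : 0 < F (a+1) + inn (a+1) :=
    lt_of_lt_of_le (by linarith [hm]) (hνlow (a+1) (by omega))
  have hn1up : F a + inn a ≤ F (a+1) := hνup a
  have hn2up : F (a+1) + inn (a+1) ≤ M := (hνup (a+1)).trans (hFM (a+1+1))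
  have hkey := key (a+1)
  have hθ1 : θ (a+1) = P (a+1) / F (a+1) := hθval (a+1)
  -- p2/n2 ≤ θ1 - s/n2
  have hstep1 : P (a+1+1) ≤ θ (a+1) * (F (a+1) + inn (a+1)) - s (a+1) := by
    have h2 : θ (a+1) * F (a+1) = P (a+1) := hθF (a+1)
    simp only [hsdef]
    nlinarith [hkey, h2]
  have hstep2 : P (a+1+1) / (F (a+1) + inn (a+1)) ≤ θ (a+1) - s (a+1) / (F (a+1) + inn (a+1)) := by
    rw [div_le_iff₀ hn2pos]
    have h5 : (θ (a+1) - s (a+1) / (F (a+1) + inn (a+1))) * (F (a+1) + inn (a+1))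
        = θ (a+1) * (F (a+1) + inn (a+1)) - s (a+1) := by
      rw [sub_mul, div_mul_cancel₀ _ (ne_of_gt hn2pos)]
    rw [h5]
    exact hstep1
  have hstep3 : s (a+1) / M ≤ s (a+1) / (F (a+1) + inn (a+1)) :=
    div_le_div_of_nonneg_left (hsnn (a+1)) hn2pos hn2up
  have hstep4 : θ (a+1) ≤ P (a+1) / (F a + inn a) := by
    rw [hθ1]
    exact div_le_div_of_nonneg_left (hPnn (a+1)) hn1pos hn1up
  have hstep5 : c * ‖x (a+1) - x (a+1+1)‖^2 + c * ‖u (a+1) - u (a+1+1)‖^2 ≤ s (a+1) / M := by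
    have h7 : min α β * (‖x (a+1) - x (a+1+1)‖^2 + ‖u (a+1) - u (a+1+1)‖^2) ≤ s (a+1) := by
      simp only [hsdef]
      nlinarith [mul_le_mul_of_nonneg_right (min_le_left α β) (sq_nonneg ‖x (a+1) - x (a+1+1)‖),
        mul_le_mul_of_nonneg_right (min_le_right α β) (sq_nonneg ‖u (a+1) - u (a+1+1)‖)]
    have h8 : c * ‖x (a+1) - x (a+1+1)‖^2 + c * ‖u (a+1) - u (a+1+1)‖^2
        = (min α β * (‖x (a+1) - x (a+1+1)‖^2 + ‖u (a+1) - u (a+1+1)‖^2)) / M := by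
      simp only [hcdef]
      ring
    rw [h8]
    exact (div_le_div_iff_of_pos_right hMpos).mpr h7
  linarith [hstep1, hstep2, hstep3, hstep4, hstep5]
end
end
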